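/- arXiv:2411.01051 — 8 statements merged into one kernel-verified Lean document; each statement's English description precedes it below -/
import Mathlib

section
/- Let θ : H → M be a transfer homomorphism of cancellative commutative monoids and let c ∈ H be irreducible. If c is absolutely irreducible in H, then θ(c) is absolutely irreducible in M. -/
/-- An irreducible element is absolutely irreducible if every factorization of each of
its powers into irreducibles is essentially the same as the power of itself. -/
def AbsolutelyIrreducible {H : Type*} [CancelCommMonoid H] (r : H) : Prop :=
  Irreducible r ∧ ∀ n : ℕ, 1 ≤ n → ∀ L : Multiset H, (∀ a ∈ L, Irreducible a) →
    L.prod = r ^ n → Multiset.Rel Associated L (Multiset.replicate n r)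

/-- Transfer homomorphism of commutative (cancellative) monoids. -/
def IsTransferHom {H M : Type*} [CancelCommMonoid H] [CancelCommMonoid M] (θ : H →* M) : Prop :=
  (∀ m : M, ∃ h : H, ∃ u : M, IsUnit u ∧ m = θ h * u) ∧
  (∀ h : H, IsUnit (θ h) → IsUnit h) ∧
  (∀ u : H, ∀ b c : M, θ u = b * c →
    ∃ v w : H, u = v * w ∧ Associated (θ v) b ∧ Associated (θ w) c)

/-- Lifting a factorization along a transfer homomorphism. -/
lemma lift_fact {H M : Type*} [CancelCommMonoid H] [CancelCommMonoid M] (θ : H →* M)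
    (hθ : IsTransferHom θ) :
    ∀ L : Multiset M, ∀ x : H, ∀ u : M, IsUnit u → θ x * u = L.prod →
      (L = 0 ∧ IsUnit x) ∨ ∃ K : Multiset H, x = K.prod ∧
        Multiset.Rel (fun h m => Associated (θ h) m) K L := by
  intro L
  induction L using Multiset.induction with
  | empty =>
    intro x u hu h
    left
    rw [Multiset.prod_zero] at h
    exact ⟨rfl, hθ.2.1 x (isUnit_of_mul_isUnit_left (h ▸ isUnit_one))⟩
  | cons a L' ih =>
    intro x u hu h
    rw [Multiset.prod_cons] at h
    obtain ⟨u', rfl⟩ := hu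
    have h2 : θ x = a * (L'.prod * ↑u'⁻¹) := by
      have : θ x = θ x * ↑u' * ↑u'⁻¹ := by
        rw [mul_assoc, u'.mul_inv, mul_one]
      rw [this, h, mul_assoc]
    obtain ⟨v, w, hx, hva, hwr⟩ := hθ.2.2 x a _ h2
    have hwr' : Associated (θ w) L'.prod :=
      hwr.trans ⟨u', by rw [mul_assoc, u'.inv_mul, mul_one]⟩
    obtain ⟨u'', hu''⟩ := hwr'
    rcases ih w ↑u'' u''.isUnit hu'' with ⟨hL0, hwu⟩ | ⟨K, hwK, hrel⟩
    · right
      refine ⟨{x}, by simp, ?_⟩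
      rw [hL0]
      refine Multiset.rel_cons_left.mpr ⟨a, 0, ?_, Multiset.rel_zero_left.mpr rfl, rfl⟩
      have : Associated (θ x) (θ v) := by
        rw [hx, map_mul]
        exact (associated_mul_unit_left _ _ (hwu.map θ)).symm.symm
      exact this.trans hva
    · right
      refine ⟨v ::ₘ K, by rw [Multiset.prod_cons, ← hwK, hx], ?_⟩
      exact Multiset.Rel.cons hva hrel

lemma irred_of_transfer {H M : Type*} [CancelCommMonoid H] [CancelCommMonoid M] (θ : H →* M)
    (hθ : IsTransferHom θ) {h : H} (hh : Irreducible (θ h)) : Irreducible h := by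
  constructor
  · exact fun hu => hh.not_isUnit (hu.map θ)
  · intro p q hpq
    have : θ h = θ p * θ q := by rw [hpq, map_mul]
    rcases hh.isUnit_or_isUnit this with h1 | h1
    · exact Or.inl (hθ.2.1 p h1)
    · exact Or.inr (hθ.2.1 q h1)

theorem stmt_1 {H M : Type*} [CancelCommMonoid H] [CancelCommMonoid M] (θ : H →* M)
    (hθ : IsTransferHom θ) (c : H) (hc : Irreducible c)
    (habs : AbsolutelyIrreducible c) : AbsolutelyIrreducible (θ c) := by
  have hirr : Irreducible (θ c) := by
    constructor
    · exact fun hu => hc.not_isUnit (hθ.2.1 c hu)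
    · intro b c' hbc
      obtain ⟨v, w, hvw, hvb, hwc⟩ := hθ.2.2 c b c' hbc
      rcases hc.isUnit_or_isUnit hvw with h1 | h1
      · exact Or.inl (hvb.isUnit (h1.map θ))
      · exact Or.inr (hwc.isUnit (h1.map θ))
  refine ⟨hirr, ?_⟩
  intro n hn L hLirr hL
  have hfact : θ (c ^ n) * 1 = L.prod := by rw [map_pow, mul_one, hL]
  rcases lift_fact θ hθ L (c ^ n) 1 isUnit_one hfact with ⟨hL0, hcu⟩ | ⟨K, hK, hrel⟩
  · exact absurd ((isUnit_pow_iff (by omega)).mp hcu) hc.not_isUnit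
  · have hKirr : ∀ k ∈ K, Irreducible k := by
      intro k hk
      obtain ⟨a, ha, hka⟩ := Multiset.exists_mem_of_rel_of_mem hrel hk
      exact irred_of_transfer θ hθ (hka.symm.irreducible (hLirr a ha))
    have hKrel := habs.2 n hn K hKirr hK.symm
    rw [Multiset.rel_replicate_right] at hKrel
    rw [Multiset.rel_replicate_right]
    constructor
    · rw [← Multiset.card_eq_card_of_rel hrel, hKrel.1]
    · intro a ha
      obtain ⟨k, hk, hka⟩ := Multiset.exists_mem_of_rel_of_mem (Multiset.rel_flip.mpr hrel)
        (by exact ha)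
      exact (Associated.symm hka).trans ((hKrel.2 k hk).map θ)
end

section
/- Let K be a field, let n ≥ 2, and let R = K + X^n·K[[X]] be the subring of K[[X]] consisting of power series whose coefficients of X^1, ..., X^{n-1} vanish. Then the irreducible elements of R are exactly the elements of the form u·X^m where u is a unit of K[[X]] (with u·X^m ∈ R) and n ≤ m ≤ 2n−1. -/
open PowerSeries in
theorem stmt_4 {K : Type*} [Field K] (n : ℕ) (hn : 2 ≤ n)
    (R : Subring (PowerSeries K))
    (hR : ∀ f : PowerSeries K, f ∈ R ↔ ∀ i : ℕ, 0 < i → i < n → PowerSeries.coeff i f = 0)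
    (r : R) :
    Irreducible r ↔ ∃ (u : (PowerSeries K)ˣ) (m : ℕ),
      n ≤ m ∧ m ≤ 2 * n - 1 ∧
      (r : PowerSeries K) = (u : PowerSeries K) * PowerSeries.X ^ m := by
  -- membership lemma: g * X^m ∈ R whenever n ≤ m
  have hmem : ∀ (g : PowerSeries K) (m : ℕ), n ≤ m → g * X ^ m ∈ R := by
    intro g m hm
    rw [hR]
    intro i hi0 hin
    apply coeff_of_lt_order
    have h1 : (m : ℕ∞) ≤ (g * X ^ m).order := by
      have h2 := le_order_mul g ((X : PowerSeries K) ^ m)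
      rw [order_X_pow] at h2
      exact le_trans le_add_self h2
    refine lt_of_lt_of_le ?_ h1
    exact_mod_cast lt_of_lt_of_le hin hm
  -- unit criterion
  have hunit : ∀ a : R, IsUnit a ↔ PowerSeries.constantCoeff (a : PowerSeries K) ≠ 0 := by
    intro a
    constructor
    · rintro ⟨v, rfl⟩
      have h1 : (v.val : PowerSeries K) * (v.inv : PowerSeries K) = 1 := by
        rw [← Subring.coe_mul, v.val_inv]; rfl
      have := congrArg (PowerSeries.constantCoeff) h1
      rw [map_mul, map_one] at this
      intro h0
      rw [h0, zero_mul] at this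
      exact zero_ne_one this
    · intro hc
      have hU : IsUnit (a : PowerSeries K) := isUnit_iff_constantCoeff.mpr (isUnit_iff_ne_zero.mpr hc)
      obtain ⟨w, hw⟩ := hU
      have hwinv : (w.inv : PowerSeries K) ∈ R := by
        rw [hR]
        intro i hi0 hin
        have h1 : PowerSeries.coeff i ((w.val : PowerSeries K) * w.inv) = 0 := by
          rw [w.val_inv, coeff_one, if_neg (Nat.pos_iff_ne_zero.mp hi0)]
        rw [coeff_mul] at h1
        rw [Finset.sum_eq_single (0, i)] at h1
        · rw [coeff_zero_eq_constantCoeff, hw] at h1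
          exact (mul_eq_zero.mp h1).resolve_left hc
        · rintro ⟨p, q⟩ hpq hne
          rw [Finset.HasAntidiagonal.mem_antidiagonal] at hpq
          have hp0 : 0 < p := by
            rcases Nat.eq_zero_or_pos p with h | h
            · exfalso; apply hne; subst h; simp at hpq; simp [hpq]
            · exact h
          have hpn : p < n := lt_of_le_of_lt (by omega) hin
          have : PowerSeries.coeff p (w.val : PowerSeries K) = 0 := by
            rw [hw]; exact (hR _).mp a.2 p hp0 hpn
          simp [this]
        · intro h; exact absurd (Finset.HasAntidiagonal.mem_antidiagonal.mpr (by simp)) h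
      refine ⟨⟨a, ⟨w.inv, hwinv⟩, ?_, ?_⟩, rfl⟩
      · refine Subtype.ext ?_
        simp only [Subring.coe_mul, OneMemClass.coe_one]
        rw [← hw]; exact w.val_inv
      · refine Subtype.ext ?_
        simp only [Subring.coe_mul, OneMemClass.coe_one]
        rw [← hw]; exact w.inv_val
  -- order lower bound for non-units
  have hord : ∀ a : R, PowerSeries.constantCoeff (a : PowerSeries K) = 0 →
      (n : ℕ∞) ≤ (a : PowerSeries K).order := by
    intro a hc
    apply nat_le_order
    intro i hi
    rcases Nat.eq_zero_or_pos i with h | h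
    · subst h; rwa [coeff_zero_eq_constantCoeff]
    · exact (hR _).mp a.2 i h hi
  constructor
  · rintro ⟨hnu, hfac⟩
    have h0nu : ¬ IsUnit (0 : R) := by
      rw [hunit]; simp
    have hne : (r : PowerSeries K) ≠ 0 := by
      intro h
      have hr0 : r = 0 := Subtype.ext (by simpa using h)
      rcases hfac (a := 0) (b := 0) (by rw [hr0, mul_zero]) with h | h <;> exact h0nu h
    have hc0 : PowerSeries.constantCoeff (r : PowerSeries K) = 0 := by
      by_contra hc
      exact hnu ((hunit r).mpr hc)
    set m := (r : PowerSeries K).order.lift (order_finite_iff_ne_zero.mpr hne) with hm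
    have hmo : ((m : ℕ∞)) = (r : PowerSeries K).order := ENat.coe_lift _ _
    have hnm : n ≤ m := by
      have := hord r hc0
      rw [← hmo] at this
      exact_mod_cast this
    set g := divXPowOrder (r : PowerSeries K) with hgdef
    have hg : X ^ m * g = (r : PowerSeries K) :=
      by rw [show m = (r : PowerSeries K).order.toNat by rw [← hmo, ENat.toNat_coe]]; exact X_pow_order_mul_divXPowOrder
    have hgu : IsUnit g := isUnit_divided_by_X_pow_order hne
    refine ⟨hgu.unit, m, hnm, ?_, by rw [IsUnit.unit_spec, mul_comm, hg]⟩
    by_contra hm2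
    have h2n : 2 * n ≤ m := by omega
    have hne2 : n ≤ m - n := by omega
    set a : R := ⟨X ^ n, by simpa using hmem 1 n le_rfl⟩ with hadef
    set b : R := ⟨g * X ^ (m - n), hmem g (m - n) hne2⟩ with hbdef
    have hrab : r = a * b := by
      refine Subtype.ext ?_
      simp only [Subring.coe_mul]
      rw [← hg]
      show X ^ m * g = X ^ n * (g * X ^ (m - n))
      rw [mul_left_comm, ← pow_add, Nat.add_sub_cancel' (by omega : n ≤ m), mul_comm]
    rcases hfac (a := a) (b := b) hrab with h | h
    · have := (hunit a).mp h
      apply this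
      show PowerSeries.constantCoeff (X ^ n) = 0
      rw [map_pow, constantCoeff_X, zero_pow (by omega : n ≠ 0)]
    · have := (hunit b).mp h
      apply this
      show PowerSeries.constantCoeff (g * X ^ (m - n)) = 0
      rw [map_mul, map_pow, constantCoeff_X, zero_pow (by omega : m - n ≠ 0), mul_zero]
  · rintro ⟨u, m, hnm, hm2, hru⟩
    have hXm : (X : PowerSeries K) ^ m ≠ 0 := pow_ne_zero _ X_ne_zero
    have hrne : (r : PowerSeries K) ≠ 0 := by
      rw [hru]; exact mul_ne_zero u.ne_zero hXm
    have hrord : (r : PowerSeries K).order = m := by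
      rw [hru, order_mul, order_zero_of_unit u.isUnit, order_X_pow, zero_add]
    constructor
    · intro hu
      have := (hunit r).mp hu
      apply this
      rw [hru, map_mul, map_pow, constantCoeff_X, zero_pow (by omega : m ≠ 0), mul_zero]
    · intro a b hab
      by_contra hcon
      push_neg at hcon
      obtain ⟨ha, hb⟩ := hcon
      have hca : PowerSeries.constantCoeff (a : PowerSeries K) = 0 := by
        by_contra hc; exact ha ((hunit a).mpr hc)
      have hcb : PowerSeries.constantCoeff (b : PowerSeries K) = 0 := by
        by_contra hc; exact hb ((hunit b).mpr hc)
      have hab' : (r : PowerSeries K) = (a : PowerSeries K) * (b : PowerSeries K) := by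
        rw [hab]; rfl
      have : ((2 * n : ℕ) : ℕ∞) ≤ (m : ℕ∞) := by
        calc ((2 * n : ℕ) : ℕ∞) = (n : ℕ∞) + (n : ℕ∞) := by
              rw [two_mul]; exact_mod_cast Nat.cast_add n n
          _ ≤ (a : PowerSeries K).order + (b : PowerSeries K).order :=
              add_le_add (hord a hca) (hord b hcb)
          _ = (r : PowerSeries K).order := by rw [hab', order_mul]
          _ = (m : ℕ∞) := hrord
      have : 2 * n ≤ m := by exact_mod_cast this
      omega
end

section
/- Let K₁ ⊊ K₂ be fields and R = K₁ + X·K₂[[X]] = {f ∈ K₂[[X]] : f(0) ∈ K₁}. Then R has no prime elements and no absolutely irreducible elements; in particular, for any irreducible r = u·X^m of R and any c ∈ K₂ \ K₁, the factorization r² = (uc·X^m)·(uc^{-1}·X^m) is essentially different from r·r. -/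
open PowerSeries

theorem stmt_6 {K : Type*} [Field K] (K₁ : Subfield K) (hK₁ : K₁ ≠ ⊤)
    (R : Subring (PowerSeries K))
    (hR : ∀ f : PowerSeries K, f ∈ R ↔ PowerSeries.constantCoeff f ∈ K₁) :
    (∀ r : R, ¬ Prime r) ∧
    (∀ r : R, Irreducible r →
      ¬ (∀ (t : ℕ), 1 ≤ t → ∀ L : Multiset R, (∀ a ∈ L, Irreducible a) → L.prod = r ^ t →
          Multiset.Rel Associated L (Multiset.replicate t r))) ∧
    (∀ r : R, Irreducible r → ∀ c : K, c ∉ K₁ →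
      ∃ s t : R, (s : PowerSeries K) = PowerSeries.C c * (r : PowerSeries K) ∧
        (t : PowerSeries K) = PowerSeries.C c⁻¹ * (r : PowerSeries K) ∧
        s * t = r ^ 2 ∧ Irreducible s ∧ Irreducible t ∧
        ¬ Multiset.Rel Associated ({s, t} : Multiset R) (Multiset.replicate 2 r)) := by
  classical
  -- a witness outside K₁
  obtain ⟨c₀, hc₀⟩ : ∃ c : K, c ∉ K₁ := by
    by_contra h
    push_neg at h
    exact hK₁ (by ext x; simpa using h x)
  -- units of R are exactly elements with nonzero constant coefficient
  have hunit : ∀ f : R, IsUnit f ↔ constantCoeff (f : PowerSeries K) ≠ 0 := by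
    intro f
    constructor
    · rintro ⟨u, rfl⟩ h0
      have h1 : ((u : R) : PowerSeries K) * ((↑u⁻¹ : R) : PowerSeries K) = 1 := by
        exact_mod_cast congrArg (Subtype.val) u.mul_inv
      have := congrArg (constantCoeff) h1
      rw [map_mul, map_one, h0, zero_mul] at this
      exact zero_ne_one this
    · intro h0
      have hmem : ((f : PowerSeries K)⁻¹ : PowerSeries K) ∈ R := by
        rw [hR, PowerSeries.constantCoeff_inv]
        exact K₁.inv_mem ((hR _).mp f.2)
      refine IsUnit.of_mul_eq_one (a := f) ⟨_, hmem⟩ (Subtype.ext ?_)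
      exact PowerSeries.mul_inv_cancel _ h0
  have hnonunit : ∀ f : R, ¬ IsUnit f → constantCoeff (f : PowerSeries K) = 0 := by
    intro f hf
    by_contra h
    exact hf ((hunit f).mpr h)
  -- r does not divide (C d) * r when d ∉ K₁
  have hndvd : ∀ (r : R), (r : PowerSeries K) ≠ 0 → ∀ (d : K), d ∉ K₁ →
      ∀ (hmem : PowerSeries.C d * (r : PowerSeries K) ∈ R),
      ¬ (r ∣ (⟨_, hmem⟩ : R)) := by
    rintro r hrne d hd hmem ⟨q, hq⟩
    have h1 : PowerSeries.C d * (r : PowerSeries K)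
        = (r : PowerSeries K) * (q : PowerSeries K) := congrArg Subtype.val hq
    have h2 : (q : PowerSeries K) = PowerSeries.C d :=
      mul_left_cancel₀ hrne (by rw [← h1]; ring)
    have := (hR _).mp q.2
    rw [h2, PowerSeries.constantCoeff_C] at this
    exact hd this
  -- irreducibility of C d * r for d ≠ 0
  have hirr : ∀ (r : R), Irreducible r → constantCoeff (r : PowerSeries K) = 0 →
      ∀ (d : K), d ≠ 0 → ∀ (hmem : PowerSeries.C d * (r : PowerSeries K) ∈ R),
      Irreducible (⟨_, hmem⟩ : R) := by
    intro r hr hr0 d hd hmem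
    constructor
    · intro hu
      have := (hunit _).mp hu
      simp only [map_mul, PowerSeries.constantCoeff_C, hr0, mul_zero] at this
      exact this rfl
    · rintro a b hab
      have h1 : PowerSeries.C d * (r : PowerSeries K)
          = (a : PowerSeries K) * (b : PowerSeries K) := congrArg Subtype.val hab
      have hc0 : constantCoeff (a : PowerSeries K) * constantCoeff (b : PowerSeries K) = 0 := by
        have := congrArg (constantCoeff) h1
        simp only [map_mul, PowerSeries.constantCoeff_C, hr0, mul_zero] at this
        exact this.symm
      have hdd : PowerSeries.C d⁻¹ * PowerSeries.C d = 1 := by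
        rw [← map_mul, inv_mul_cancel₀ hd, map_one]
      rcases mul_eq_zero.mp hc0 with h0 | h0
      · have hamem : PowerSeries.C d⁻¹ * (a : PowerSeries K) ∈ R := by
          rw [hR]; simp [h0, K₁.zero_mem]
        have hr' : r = (⟨_, hamem⟩ : R) * b := by
          apply Subtype.ext
          show (r : PowerSeries K) = PowerSeries.C d⁻¹ * (a : PowerSeries K) * b
          rw [mul_assoc, ← h1, ← mul_assoc, hdd, one_mul]
        rcases hr.isUnit_or_isUnit hr' with h | h
        · have := (hunit _).mp h
          simp [h0] at this
        · exact Or.inr h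
      · have hbmem : PowerSeries.C d⁻¹ * (b : PowerSeries K) ∈ R := by
          rw [hR]; simp [h0, K₁.zero_mem]
        have hr' : r = a * (⟨_, hbmem⟩ : R) := by
          apply Subtype.ext
          show (r : PowerSeries K) = (a : PowerSeries K) * (PowerSeries.C d⁻¹ * b)
          rw [mul_comm (a : PowerSeries K), mul_assoc, mul_comm (b : PowerSeries K), ← h1,
            ← mul_assoc, hdd, one_mul]
        rcases hr.isUnit_or_isUnit hr' with h | h
        · exact Or.inl h
        · have := (hunit _).mp h
          simp [h0] at this
  -- core construction
  have hcore : ∀ r : R, Irreducible r → ∀ c : K, c ∉ K₁ →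
      ∃ s t : R, (s : PowerSeries K) = PowerSeries.C c * (r : PowerSeries K) ∧
        (t : PowerSeries K) = PowerSeries.C c⁻¹ * (r : PowerSeries K) ∧
        s * t = r ^ 2 ∧ Irreducible s ∧ Irreducible t ∧
        ¬ Multiset.Rel Associated ({s, t} : Multiset R) (Multiset.replicate 2 r) := by
    intro r hr c hc
    have hcne : c ≠ 0 := fun h => hc (h ▸ K₁.zero_mem)
    have hcinv : c⁻¹ ∉ K₁ := fun h => hc (by simpa using K₁.inv_mem h)
    have hr0 : constantCoeff (r : PowerSeries K) = 0 := hnonunit r hr.not_isUnit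
    have hrne : (r : PowerSeries K) ≠ 0 := by
      intro h
      exact hr.ne_zero (Subtype.ext h)
    have hsmem : PowerSeries.C c * (r : PowerSeries K) ∈ R := by rw [hR]; simp [hr0, K₁.zero_mem]
    have htmem : PowerSeries.C c⁻¹ * (r : PowerSeries K) ∈ R := by rw [hR]; simp [hr0, K₁.zero_mem]
    refine ⟨⟨_, hsmem⟩, ⟨_, htmem⟩, rfl, rfl, ?_, hirr r hr hr0 c hcne hsmem,
      hirr r hr hr0 c⁻¹ (inv_ne_zero hcne) htmem, ?_⟩
    · apply Subtype.ext
      show PowerSeries.C c * (r : PowerSeries K) * (PowerSeries.C c⁻¹ * r)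
          = ((r ^ 2 : R) : PowerSeries K)
      push_cast
      rw [mul_mul_mul_comm, ← map_mul, mul_inv_cancel₀ hcne, map_one, one_mul, sq]
    · intro hrel
      have hs : Associated (⟨_, hsmem⟩ : R) r :=
        (Multiset.rel_replicate_right.mp hrel).2 _ (by simp)
      exact hndvd r hrne c hc hsmem hs.symm.dvd
  refine ⟨?_, ?_, hcore⟩
  · rintro r ⟨hne, hnu, hp⟩
    have hr0 : constantCoeff (r : PowerSeries K) = 0 := hnonunit r hnu
    have hrne : (r : PowerSeries K) ≠ 0 := fun h => hne (Subtype.ext h)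
    have hcne : c₀ ≠ 0 := fun h => hc₀ (h ▸ K₁.zero_mem)
    have hcinv : c₀⁻¹ ∉ K₁ := fun h => hc₀ (by simpa using K₁.inv_mem h)
    have hsmem : PowerSeries.C c₀ * (r : PowerSeries K) ∈ R := by rw [hR]; simp [hr0, K₁.zero_mem]
    have htmem : PowerSeries.C c₀⁻¹ * (r : PowerSeries K) ∈ R := by rw [hR]; simp [hr0, K₁.zero_mem]
    have hst : (⟨_, hsmem⟩ : R) * (⟨_, htmem⟩ : R) = r * r := by
      apply Subtype.ext
      show PowerSeries.C c₀ * (r : PowerSeries K) * (PowerSeries.C c₀⁻¹ * r)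
          = ((r * r : R) : PowerSeries K)
      push_cast
      rw [mul_mul_mul_comm, ← map_mul, mul_inv_cancel₀ hcne, map_one, one_mul]
    have hdvd : r ∣ (⟨_, hsmem⟩ : R) * (⟨_, htmem⟩ : R) := ⟨r, hst⟩
    rcases hp _ _ hdvd with h | h
    · exact hndvd r hrne c₀ hc₀ hsmem h
    · exact hndvd r hrne c₀⁻¹ hcinv htmem h
  · intro r hr H
    obtain ⟨s, t, hs, ht, hst, hsi, hti, hrel⟩ := hcore r hr c₀ hc₀
    apply hrel
    apply H 2 (by norm_num)
    · intro a ha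
      rcases Multiset.mem_cons.mp ha with h | h
      · exact h ▸ hsi
      · rw [Multiset.mem_singleton.mp h]; exact hti
    · rw [show ({s, t} : Multiset R).prod = s * t by simp, hst]
end

section
/- The ring Int(ℤ) of integer-valued polynomials has no prime elements. -/
open Polynomial

-- among q consecutive integers m, m-1, ..., m-(q-1), one is divisible by q
lemma aux_dvd_prod (q : ℕ) (hq : 0 < q) (m : ℤ) :
    (q : ℤ) ∣ ∏ j ∈ Finset.range q, (m - (j : ℤ)) := by
  have h0 : (0:ℤ) < q := by exact_mod_cast hq
  have h1 : 0 ≤ m % q := Int.emod_nonneg m (ne_of_gt h0)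
  have h2 : m % q < q := Int.emod_lt_of_pos m h0
  have hmem : (m % q).toNat ∈ Finset.range q := by
    rw [Finset.mem_range]; omega
  refine dvd_trans ?_ (Finset.dvd_prod_of_mem _ hmem)
  have h3 : ((m % q).toNat : ℤ) = m % q := Int.toNat_of_nonneg h1
  have h4 := Int.emod_def m q
  exact ⟨m / q, by omega⟩

theorem stmt_8 (R : Subring (Polynomial ℚ))
    (hR : ∀ f : Polynomial ℚ, f ∈ R ↔ ∀ n : ℤ, ∃ m : ℤ, f.eval (n : ℚ) = (m : ℚ)) :
    ∀ f : R, ¬ Prime f := by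
  intro f hp
  set F : Polynomial ℚ := (f : Polynomial ℚ) with hFdef
  have hval : ∀ (g : R) (n : ℤ), ∃ m : ℤ, (g : Polynomial ℚ).eval (n:ℚ) = (m:ℚ) :=
    fun g n => (hR g).mp g.2 n
  have hF0 : F ≠ 0 := by
    intro h
    exact hp.ne_zero (Subtype.ext h)
  -- units of R
  have hunit : ∀ c₀ : ℤ, (F = Polynomial.C ((c₀:ℚ))) → c₀ = 1 ∨ c₀ = -1 → False := by
    intro c₀ hc hcase
    apply hp.not_unit
    rcases hcase with h1 | h1
    · have : f = 1 := by
        apply Subtype.ext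
        show F = 1
        rw [hc, h1]; simp
      rw [this]; exact isUnit_one
    · have : f = -1 := by
        apply Subtype.ext
        show F = ((-1 : R) : Polynomial ℚ)
        rw [hc, h1]; simp
      rw [this]; exact isUnit_one.neg
  -- find a point with large value
  have key : ∃ (n₀ m₀ : ℤ), F.eval (n₀:ℚ) = (m₀:ℚ) ∧ 2 ≤ m₀.natAbs := by
    by_cases hdeg : F.natDegree = 0
    · obtain ⟨c₀, hc₀⟩ := hval f 0
      have hFC : F = Polynomial.C (F.coeff 0) := Polynomial.eq_C_of_natDegree_eq_zero hdeg
      have hcc : F.coeff 0 = (c₀:ℚ) := by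
        rw [show ((f : Polynomial ℚ)) = F from rfl, hFC, Polynomial.eval_C] at hc₀
        exact hc₀
      refine ⟨0, c₀, hc₀, ?_⟩
      by_contra hlt
      have hc3 : c₀ = 0 ∨ c₀ = 1 ∨ c₀ = -1 := by omega
      rcases hc3 with h1 | h1 | h1
      · apply hF0
        rw [hFC, hcc, h1]
        simp
      · exact hunit c₀ (by rw [hFC, hcc]) (Or.inl h1)
      · exact hunit c₀ (by rw [hFC, hcc]) (Or.inr h1)
    · -- nonconstant case: choose a point beyond all roots of F, F-1, F+1
      set s : Finset ℚ :=
        (F.roots + (F - Polynomial.C 1).roots + (F - Polynomial.C (-1)).roots).toFinset with hsdef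
      obtain ⟨M, hM⟩ := s.exists_le
      set n₀ : ℤ := ⌈M⌉ + 1 with hn₀def
      have hgt : M < (n₀:ℚ) := by
        rw [hn₀def]
        push_cast
        linarith [Int.le_ceil M]
      obtain ⟨m₀, hm₀⟩ := hval f n₀
      refine ⟨n₀, m₀, hm₀, ?_⟩
      have hnotroot : ∀ v : ℚ, F.eval (n₀:ℚ) = v → (n₀:ℚ) ∈ (F - Polynomial.C v).roots := by
        intro v hv
        rw [Polynomial.mem_roots']
        constructor
        · intro h0
          apply hdeg
          have hnd : (F - Polynomial.C v).natDegree = F.natDegree := Polynomial.natDegree_sub_C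
          rw [h0] at hnd
          simpa using hnd.symm
        · simp [Polynomial.IsRoot, hv]
      by_contra hlt
      have hc3 : m₀ = 0 ∨ m₀ = 1 ∨ m₀ = -1 := by omega
      have hFm : F.eval (n₀:ℚ) = (m₀:ℚ) := hm₀
      rcases hc3 with h1 | h1 | h1
      · have hmem := hnotroot 0 (by rw [hFm, h1]; simp)
        have : (n₀:ℚ) ∈ s := by
          rw [hsdef, Multiset.mem_toFinset]
          simp only [Multiset.mem_add]
          left; left
          simpa using hmem
        exact absurd (hM _ this) (not_le.mpr hgt)
      · have hmem := hnotroot 1 (by rw [hFm, h1]; simp)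
        have : (n₀:ℚ) ∈ s := by
          rw [hsdef, Multiset.mem_toFinset]
          simp only [Multiset.mem_add]
          left; right
          exact hmem
        exact absurd (hM _ this) (not_le.mpr hgt)
      · have hmem := hnotroot (-1) (by rw [hFm, h1]; simp)
        have : (n₀:ℚ) ∈ s := by
          rw [hsdef, Multiset.mem_toFinset]
          simp only [Multiset.mem_add]
          right
          exact hmem
        exact absurd (hM _ this) (not_le.mpr hgt)
  obtain ⟨n₀, m₀, hm₀, hm₀2⟩ := key
  set q : ℕ := m₀.natAbs.minFac with hqdef
  have hqp : q.Prime := Nat.minFac_prime (by omega)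
  have hqpos : 0 < q := hqp.pos
  have hqQ : ((q:ℚ)) ≠ 0 := by exact_mod_cast hqpos.ne'
  have hqdvd : (q:ℤ) ∣ m₀ :=
    dvd_trans (Int.natCast_dvd_natCast.mpr (Nat.minFac_dvd _)) (Int.natAbs_dvd.mpr dvd_rfl)
  obtain ⟨q', hq'⟩ : ∃ q', q = q' + 1 := ⟨q - 1, by omega⟩
  -- the general membership lemma for 1/q times an element with q-divisible values
  have memdiv : ∀ (G : Polynomial ℚ), (∀ n : ℤ, ∃ m : ℤ, (q:ℤ) ∣ m ∧ G.eval (n:ℚ) = (m:ℚ)) →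
      (Polynomial.C ((q:ℚ))⁻¹ * G) ∈ R := by
    intro G hG
    rw [hR]
    intro n
    obtain ⟨m, ⟨c, hc⟩, hm⟩ := hG n
    refine ⟨c, ?_⟩
    rw [Polynomial.eval_mul, Polynomial.eval_C, hm, hc]
    push_cast
    field_simp
  -- the element k
  set k : R := ∏ j ∈ Finset.range q', (f - ((j+1 : ℕ) : R)) with hkdef
  set K : Polynomial ℚ := (k : Polynomial ℚ) with hKdef
  have hK : K = ∏ j ∈ Finset.range q', (F - ((j : Polynomial ℚ) + 1)) := by
    rw [hKdef, hkdef]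
    push_cast
    rfl
  have hKeval : ∀ (n m : ℤ), F.eval (n:ℚ) = (m:ℚ) →
      K.eval (n:ℚ) = ((∏ j ∈ Finset.range q', (m - (j+1) : ℤ) : ℤ) : ℚ) := by
    intro n m hm
    rw [hK, Polynomial.eval_prod]
    push_cast
    exact Finset.prod_congr rfl (fun j _ => by simp [hm])
  -- F * K has q-divisible values
  have hFK : ∀ n : ℤ, ∃ m : ℤ, (q:ℤ) ∣ m ∧ (F * K).eval (n:ℚ) = (m:ℚ) := by
    intro n
    obtain ⟨m, hm⟩ := hval f n
    refine ⟨m * ∏ j ∈ Finset.range q', (m - (j+1) : ℤ), ?_, ?_⟩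
    · have := aux_dvd_prod q hqpos m
      rw [hq', Finset.prod_range_succ'] at this
      rw [hq']
      push_cast at this ⊢
      rw [mul_comm]
      simpa using this
    · rw [Polynomial.eval_mul, hm, hKeval n m hm]
      push_cast
      ring
  set gq : R := ⟨Polynomial.C ((q:ℚ))⁻¹ * (F * K), memdiv _ hFK⟩ with hgqdef
  have hqgq : (q : R) * gq = f * k := by
    apply Subtype.ext
    show ((q:R) : Polynomial ℚ) * (Polynomial.C ((q:ℚ))⁻¹ * (F * K)) = F * K
    have : ((q:R) : Polynomial ℚ) = Polynomial.C ((q:ℚ)) := by push_cast; simp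
    rw [this, ← mul_assoc, ← Polynomial.C_mul, mul_inv_cancel₀ hqQ]
    simp
  have hdvd : f ∣ (q : R) * gq := by
    rw [hqgq]; exact dvd_mul_right f k
  rcases hp.2.2 _ _ hdvd with hcase | hcase
  · -- f ∣ q : constant case
    obtain ⟨h₂, hq2⟩ := hcase
    have hq2' : ((q:R) : Polynomial ℚ) = F * (h₂ : Polynomial ℚ) := congrArg Subtype.val hq2
    have hqC : ((q:R) : Polynomial ℚ) = Polynomial.C ((q:ℚ)) := by push_cast; simp
    have hH2ne : (h₂ : Polynomial ℚ) ≠ 0 := by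
      intro h0
      rw [h0, mul_zero, hqC] at hq2'
      exact (Polynomial.C_ne_zero.mpr hqQ) hq2'
    have hdegF : F.natDegree = 0 := by
      have hd := Polynomial.natDegree_mul hF0 hH2ne
      rw [← hq2', hqC, Polynomial.natDegree_C] at hd
      omega
    have hFC : F = Polynomial.C (F.coeff 0) := Polynomial.eq_C_of_natDegree_eq_zero hdegF
    obtain ⟨c₀, hc₀⟩ := hval f 0
    have hcc : F.coeff 0 = (c₀:ℚ) := by
      rw [show ((f : Polynomial ℚ)) = F from rfl, hFC, Polynomial.eval_C] at hc₀
      exact hc₀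
    have hXmem : Polynomial.X ∈ R := (hR _).mpr (fun n => ⟨n, by simp⟩)
    set xR : R := ⟨Polynomial.X, hXmem⟩ with hxRdef
    set P0 : Polynomial ℚ := ∏ i ∈ Finset.range q, (Polynomial.X - ((i:ℕ) : Polynomial ℚ)) with hP0def
    have hP0vals : ∀ n : ℤ, ∃ m : ℤ, (q:ℤ) ∣ m ∧ P0.eval (n:ℚ) = (m:ℚ) := by
      intro n
      refine ⟨∏ i ∈ Finset.range q, (n - (i:ℤ)), aux_dvd_prod q hqpos n, ?_⟩
      rw [hP0def, Polynomial.eval_prod]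
      push_cast
      simp
    set P' : R := ⟨Polynomial.C ((q:ℚ))⁻¹ * P0, memdiv _ hP0vals⟩ with hP'def
    have hqP : (q:R) * P' = ∏ i ∈ Finset.range q, (xR - ((i:ℕ) : R)) := by
      apply Subtype.ext
      show ((q:R) : Polynomial ℚ) * (Polynomial.C ((q:ℚ))⁻¹ * P0)
          = ((∏ i ∈ Finset.range q, (xR - ((i:ℕ) : R)) : R) : Polynomial ℚ)
      rw [hqC, ← mul_assoc, ← Polynomial.C_mul, mul_inv_cancel₀ hqQ]
      push_cast
      simp [hP0def, hxRdef]
    have hfP : f ∣ ∏ i ∈ Finset.range q, (xR - ((i:ℕ) : R)) :=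
      dvd_trans ⟨h₂, hq2⟩ ⟨P', hqP.symm⟩
    obtain ⟨i, hi, h₃, h3⟩ := (hp.dvd_finset_prod_iff _).mp hfP
    have h3' : Polynomial.X - ((i:ℕ) : Polynomial ℚ) = F * (h₃ : Polynomial ℚ) := by
      have := congrArg Subtype.val h3
      push_cast at this
      exact this
    obtain ⟨z, hz⟩ := hval h₃ ((i:ℤ) + 1)
    have heval1 : (1:ℚ) = (c₀:ℚ) * (z:ℚ) := by
      have := congrArg (Polynomial.eval (((i:ℤ) + 1 : ℤ) : ℚ)) h3'
      rw [Polynomial.eval_mul, hz, hFC, hcc, Polynomial.eval_C] at this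
      simp at this
      linarith [this]
    have hzz : c₀ * z = 1 := by exact_mod_cast heval1.symm
    exact hunit c₀ (by rw [hFC, hcc]) (Int.isUnit_iff.mp (IsUnit.of_mul_eq_one _ hzz))
  · -- f ∣ gq
    obtain ⟨h, hh⟩ := hcase
    have hh' : Polynomial.C ((q:ℚ))⁻¹ * (F * K) = F * (h : Polynomial ℚ) := congrArg Subtype.val hh
    set H : Polynomial ℚ := (h : Polynomial ℚ) with hHdef
    have hcancel : F * K = F * (Polynomial.C ((q:ℚ)) * H) := by
      calc F * K = Polynomial.C ((q:ℚ)) * (Polynomial.C ((q:ℚ))⁻¹ * (F * K)) := by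
            rw [← mul_assoc, ← Polynomial.C_mul, mul_inv_cancel₀ hqQ]; simp
        _ = Polynomial.C ((q:ℚ)) * (F * H) := by rw [hh']
        _ = F * (Polynomial.C ((q:ℚ)) * H) := by ring
    have hKH : K = Polynomial.C ((q:ℚ)) * H := mul_left_cancel₀ hF0 hcancel
    obtain ⟨z, hz⟩ := hval h n₀
    have hint : (∏ j ∈ Finset.range q', (m₀ - (j+1) : ℤ)) = (q:ℤ) * z := by
      have e1 := hKeval n₀ m₀ hm₀
      rw [hKH, Polynomial.eval_mul, Polynomial.eval_C, hz] at e1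
      exact_mod_cast e1.symm
    have hqZ : Prime ((q:ℕ) : ℤ) := Nat.prime_iff_prime_int.mp hqp
    obtain ⟨j, hj, hdj⟩ := (hqZ.dvd_finset_prod_iff _).mp ⟨z, hint⟩
    have hdj2 : (q:ℤ) ∣ ((j:ℤ) + 1) := by
      have := dvd_sub hqdvd hdj
      simpa using this
    have hle := Int.le_of_dvd (by positivity) hdj2
    rw [Finset.mem_range] at hj
    omega
end

section
/- The polynomial f(x) = x(x²+3)/2 lies in Int(ℤ), is irreducible in Int(ℤ), but is not absolutely irreducible: f² = (x²(x²+3)/4)·(x²+3) is a factorization of f² in Int(ℤ) essentially different from f·f. -/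
open Polynomial

noncomputable def fP : ℚ[X] := C (2:ℚ)⁻¹ * (X * (X^2 + C 3))
noncomputable def gP : ℚ[X] := C (4:ℚ)⁻¹ * (X^2 * (X^2 + C 3))
noncomputable def hP : ℚ[X] := X^2 + C 3

lemma natDegree_fP : fP.natDegree = 3 := by unfold fP; compute_degree!
lemma natDegree_gP : gP.natDegree = 4 := by unfold gP; compute_degree!
lemma natDegree_hP : hP.natDegree = 2 := by unfold hP; compute_degree!

lemma eval_fP (x : ℚ) : fP.eval x = 2⁻¹ * (x * (x^2 + 3)) := by simp [fP]
lemma eval_gP (x : ℚ) : gP.eval x = 4⁻¹ * (x^2 * (x^2 + 3)) := by simp [gP]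
lemma eval_hP (x : ℚ) : hP.eval x = x^2 + 3 := by simp [hP]

lemma fP_ne : fP ≠ 0 := fun h => by have := eval_fP 1; rw [h] at this; norm_num at this
lemma gP_ne : gP ≠ 0 := fun h => by have := eval_gP 1; rw [h] at this; norm_num at this
lemma hP_ne : hP ≠ 0 := fun h => by have := eval_hP 1; rw [h] at this; norm_num at this

section
variable (R : Subring (Polynomial ℚ))
variable (hR : ∀ f : Polynomial ℚ, f ∈ R ↔ ∀ n : ℤ, ∃ m : ℤ, f.eval (n : ℚ) = (m : ℚ))

include hR

lemma intval {p : ℚ[X]} (hp : p ∈ R) (n : ℤ) : ∃ m : ℤ, p.eval (n:ℚ) = (m:ℚ) :=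
  (hR p).mp hp n

lemma mem_fP : fP ∈ R := by
  rw [hR]
  intro n
  obtain ⟨k, hk⟩ : ∃ k : ℤ, n * (n^2 + 3) = 2 * k := by
    rcases Int.even_or_odd n with ⟨t, rfl⟩ | ⟨t, rfl⟩
    · exact ⟨t * ((2*t)^2 + 3), by ring⟩
    · exact ⟨(2*t+1) * (2*t^2 + 2*t + 2), by ring⟩
  refine ⟨k, ?_⟩
  rw [eval_fP]
  have : (n:ℚ) * ((n:ℚ)^2 + 3) = 2 * (k:ℚ) := by exact_mod_cast hk
  linarith

lemma mem_gP : gP ∈ R := by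
  rw [hR]
  intro n
  obtain ⟨k, hk⟩ : ∃ k : ℤ, n^2 * (n^2 + 3) = 4 * k := by
    rcases Int.even_or_odd n with ⟨t, rfl⟩ | ⟨t, rfl⟩
    · exact ⟨t^2 * ((2*t)^2 + 3), by ring⟩
    · exact ⟨(2*t+1)^2 * (t^2 + t + 1), by ring⟩
  refine ⟨k, ?_⟩
  rw [eval_gP]
  have : (n:ℚ)^2 * ((n:ℚ)^2 + 3) = 4 * (k:ℚ) := by exact_mod_cast hk
  linarith

lemma mem_hP : hP ∈ R := by
  rw [hR]
  intro n
  exact ⟨n^2 + 3, by rw [eval_hP]; push_cast; ring⟩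

/-- units of R are ±1 -/
lemma units_pm {u v : ℚ[X]} (hu : u ∈ R) (hv : v ∈ R) (huv : u * v = 1) :
    u = 1 ∨ u = -1 := by
  have hu0 : u ≠ 0 := by rintro rfl; simp at huv
  have hv0 : v ≠ 0 := by rintro rfl; simp at huv
  have hdeg : u.natDegree + v.natDegree = 0 := by
    rw [← natDegree_mul hu0 hv0, huv, natDegree_one]
  have hu' : u = C (u.coeff 0) := eq_C_of_natDegree_eq_zero (by omega)
  obtain ⟨m, hm⟩ := intval R hR hu 0
  obtain ⟨m', hm'⟩ := intval R hR hv 0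
  push_cast at hm hm'
  have h1 : u.eval 0 * v.eval 0 = 1 := by rw [← eval_mul, huv, eval_one]
  rw [hm, hm'] at h1
  have h2 : m * m' = 1 := by exact_mod_cast h1
  have h3 : m = 1 ∨ m = -1 := Int.isUnit_iff.mp (IsUnit.of_mul_eq_one (a := m) m' h2)
  have hu0e : u.eval 0 = u.coeff 0 := (coeff_zero_eq_eval_zero u).symm
  rcases h3 with h | h
  · left; rw [hu', ← hu0e, hm, h]; norm_num
  · right; rw [hu', ← hu0e, hm, h]; norm_num

omit hR in
lemma mk_unit {a : R} (h : (a : ℚ[X]) = 1 ∨ (a : ℚ[X]) = -1) : IsUnit a := by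
  rcases h with h | h
  · have : a = 1 := Subtype.ext (by rw [h]; rfl)
    rw [this]; exact isUnit_one
  · have : a = -1 := Subtype.ext (by rw [h]; push_cast; ring)
    rw [this]; exact isUnit_one.neg

lemma val_of_unit {a : R} (h : IsUnit a) : (a : ℚ[X]) = 1 ∨ (a : ℚ[X]) = -1 := by
  obtain ⟨v, hv⟩ := isUnit_iff_exists_inv.mp h
  exact units_pm R hR a.2 v.2 (by exact_mod_cast congrArg Subtype.val hv)

lemma irr_val {p : R}
    (hdeg : (p : ℚ[X]).natDegree ≠ 0)
    (key : ∀ a b : ℚ[X], a ∈ R → b ∈ R → a * b = (p : ℚ[X]) →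
      (a = 1 ∨ a = -1) ∨ (b = 1 ∨ b = -1)) :
    Irreducible p := by
  constructor
  · intro h
    rcases val_of_unit R hR h with h' | h' <;> rw [h'] at hdeg <;> simp at hdeg
  · intro a b hab
    have hab' : (a : ℚ[X]) * (b : ℚ[X]) = (p : ℚ[X]) := by
      exact_mod_cast (congrArg Subtype.val hab).symm
    rcases key a b a.2 b.2 hab' with h | h
    · exact Or.inl (mk_unit R h)
    · exact Or.inr (mk_unit R h)

omit hR in
lemma lin_facts {a : ℚ[X]} (h : a.natDegree = 1) :
    a.coeff 1 ≠ 0 ∧ a.eval (-(a.coeff 0) / (a.coeff 1)) = 0 := by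
  have hne : a ≠ 0 := fun hz => by simp [hz] at h
  have hc1 : a.coeff 1 ≠ 0 := by
    have := leadingCoeff_ne_zero.mpr hne
    rwa [leadingCoeff, h] at this
  refine ⟨hc1, ?_⟩
  set c1 := a.coeff 1 with hc1def
  set c0 := a.coeff 0 with hc0def
  have ha' : a = C c1 * X + C c0 := eq_X_add_C_of_natDegree_le_one h.le
  rw [ha']
  simp only [eval_add, eval_mul, eval_C, eval_X]
  field_simp
  ring

omit hR in
lemma lin_zero {a : ℚ[X]} (h : a.natDegree = 1) (h0 : a.coeff 0 = 0) :
    a = C (a.coeff 1) * X := by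
  conv_lhs => rw [eq_X_add_C_of_natDegree_le_one h.le]
  rw [h0]; simp

lemma no_lin_f {a b : ℚ[X]} (haR : a ∈ R) (hbR : b ∈ R) (hab : a * b = fP)
    (hda : a.natDegree = 1) : False := by
  obtain ⟨hc1, hroot⟩ := lin_facts hda
  set r := -(a.coeff 0) / (a.coeff 1) with hrdef
  have hfr : fP.eval r = 0 := by rw [← hab, eval_mul, hroot, zero_mul]
  rw [eval_fP] at hfr
  have hr0 : r = 0 := by
    rcases mul_eq_zero.mp ((mul_eq_zero.mp hfr).resolve_left (by norm_num)) with h | h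
    · exact h
    · exfalso; nlinarith [sq_nonneg r]
  have hc0 : a.coeff 0 = 0 := by
    rw [hrdef] at hr0
    rcases div_eq_zero_iff.mp hr0 with h | h
    · exact neg_eq_zero.mp h
    · exact absurd h hc1
  have ha2 : a = C (a.coeff 1) * X := lin_zero hda hc0
  obtain ⟨cz, hcz⟩ := intval R hR haR 1
  have hc : a.coeff 1 = (cz:ℚ) := by
    rw [ha2] at hcz; push_cast at hcz; simpa using hcz
  rw [ha2, hc] at hab
  unfold fP at hab
  have hx : X * (C (cz:ℚ) * b) = X * (C (2:ℚ)⁻¹ * (X^2 + C 3)) := by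
    linear_combination hab
  have hcb : C (cz:ℚ) * b = C (2:ℚ)⁻¹ * (X^2 + C 3) := mul_left_cancel₀ X_ne_zero hx
  obtain ⟨m, hm⟩ := intval R hR hbR 0
  push_cast at hm
  have he := congrArg (Polynomial.eval (0:ℚ)) hcb
  simp only [eval_mul, eval_add, eval_pow, eval_C, eval_X] at he
  rw [hm] at he
  have h2 : (2:ℚ) * ((cz:ℚ) * (m:ℚ)) = 3 := by
    rw [he]; norm_num
  have h4 : (2:ℤ) * (cz * m) = 3 := by exact_mod_cast h2
  obtain ⟨k, hk⟩ : ∃ k : ℤ, 2 * k = 3 := ⟨cz * m, h4⟩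
  omega

lemma no_lin_g {a b : ℚ[X]} (haR : a ∈ R) (hbR : b ∈ R) (hab : a * b = gP)
    (hda : a.natDegree = 1) : False := by
  obtain ⟨hc1, hroot⟩ := lin_facts hda
  set r := -(a.coeff 0) / (a.coeff 1) with hrdef
  have hfr : gP.eval r = 0 := by rw [← hab, eval_mul, hroot, zero_mul]
  rw [eval_gP] at hfr
  have hr0 : r = 0 := by
    rcases mul_eq_zero.mp ((mul_eq_zero.mp hfr).resolve_left (by norm_num)) with h | h
    · exact pow_eq_zero_iff (by norm_num) |>.mp h
    · exfalso; nlinarith [sq_nonneg r]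
  have hc0 : a.coeff 0 = 0 := by
    rw [hrdef] at hr0
    rcases div_eq_zero_iff.mp hr0 with h | h
    · exact neg_eq_zero.mp h
    · exact absurd h hc1
  have ha2 : a = C (a.coeff 1) * X := lin_zero hda hc0
  obtain ⟨cz, hcz⟩ := intval R hR haR 1
  have hc : a.coeff 1 = (cz:ℚ) := by
    rw [ha2] at hcz; push_cast at hcz; simpa using hcz
  rw [ha2, hc] at hab
  unfold gP at hab
  have hx : X * (C (cz:ℚ) * b) = X * (C (4:ℚ)⁻¹ * (X * (X^2 + C 3))) := by
    linear_combination hab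
  have hcb : C (cz:ℚ) * b = C (4:ℚ)⁻¹ * (X * (X^2 + C 3)) := mul_left_cancel₀ X_ne_zero hx
  obtain ⟨m, hm⟩ := intval R hR hbR 2
  push_cast at hm
  have he := congrArg (Polynomial.eval (2:ℚ)) hcb
  simp only [eval_mul, eval_add, eval_pow, eval_C, eval_X] at he
  rw [hm] at he
  have h2 : (2:ℚ) * ((cz:ℚ) * (m:ℚ)) = 7 := by
    rw [he]; norm_num
  have h4 : (2:ℤ) * (cz * m) = 7 := by exact_mod_cast h2
  obtain ⟨k, hk⟩ : ∃ k : ℤ, 2 * k = 7 := ⟨cz * m, h4⟩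
  omega

lemma no_quad_g {a b : ℚ[X]} (haR : a ∈ R) (hbR : b ∈ R) (hab : a * b = gP)
    (hda : a.natDegree = 2) (hdb : b.natDegree = 2) (ha0 : a.coeff 0 = 0) : False := by
  have hane : a ≠ 0 := fun hz => by simp [hz] at hda
  obtain ⟨a₁, ha₁⟩ := X_dvd_iff.mpr ha0
  have ha1ne : a₁ ≠ 0 := fun hz => by rw [ha₁, hz, mul_zero] at hane; exact hane rfl
  have hd1 : a₁.natDegree = 1 := by
    have := natDegree_mul (X_ne_zero (R := ℚ)) ha1ne
    rw [← ha₁, hda, natDegree_X] at this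
    omega
  rw [ha₁] at hab
  unfold gP at hab
  have hx : X * (a₁ * b) = X * (C (4:ℚ)⁻¹ * (X * (X^2 + C 3))) := by
    linear_combination hab
  have h1 : a₁ * b = C (4:ℚ)⁻¹ * (X * (X^2 + C 3)) := mul_left_cancel₀ X_ne_zero hx
  have h0 : a₁.eval 0 * b.eval 0 = 0 := by
    have := congrArg (Polynomial.eval (0:ℚ)) h1
    simpa using this
  rcases mul_eq_zero.mp h0 with hcase | hcase
  · -- a₁ has root 0 : a = C c * X^2
    have hc0 : a₁.coeff 0 = 0 := by rw [coeff_zero_eq_eval_zero]; exact hcase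
    have ha2 : a₁ = C (a₁.coeff 1) * X := lin_zero hd1 hc0
    have hc1 : a₁.coeff 1 ≠ 0 := (lin_facts hd1).1
    obtain ⟨cz, hcz⟩ := intval R hR haR 1
    have hc : a₁.coeff 1 = (cz:ℚ) := by
      rw [ha₁, ha2] at hcz; push_cast at hcz; simpa using hcz
    rw [ha2, hc] at h1
    have hx2 : X * (C (cz:ℚ) * b) = X * (C (4:ℚ)⁻¹ * (X^2 + C 3)) := by
      linear_combination h1
    have hcb : C (cz:ℚ) * b = C (4:ℚ)⁻¹ * (X^2 + C 3) := mul_left_cancel₀ X_ne_zero hx2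
    obtain ⟨m, hm⟩ := intval R hR hbR 0
    push_cast at hm
    have he := congrArg (Polynomial.eval (0:ℚ)) hcb
    simp only [eval_mul, eval_add, eval_pow, eval_C, eval_X] at he
    rw [hm] at he
    have h2 : (4:ℚ) * ((cz:ℚ) * (m:ℚ)) = 3 := by rw [he]; norm_num
    have h4 : (4:ℤ) * (cz * m) = 3 := by exact_mod_cast h2
    obtain ⟨k, hk⟩ : ∃ k : ℤ, 4 * k = 3 := ⟨cz * m, h4⟩
    omega
  · -- b has root 0 : b = X * b₁, then a₁ * b₁ = C 4⁻¹ * (X²+3), root contradiction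
    have hb0 : b.coeff 0 = 0 := by rw [coeff_zero_eq_eval_zero]; exact hcase
    obtain ⟨b₁, hb₁⟩ := X_dvd_iff.mpr hb0
    rw [hb₁] at h1
    have hx2 : X * (a₁ * b₁) = X * (C (4:ℚ)⁻¹ * (X^2 + C 3)) := by
      linear_combination h1
    have h2 : a₁ * b₁ = C (4:ℚ)⁻¹ * (X^2 + C 3) := mul_left_cancel₀ X_ne_zero hx2
    obtain ⟨hc1, hroot⟩ := lin_facts hd1
    set r := -(a₁.coeff 0) / (a₁.coeff 1)
    have hfr := congrArg (Polynomial.eval r) h2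
    rw [eval_mul, hroot, zero_mul] at hfr
    simp only [eval_mul, eval_add, eval_pow, eval_C, eval_X] at hfr
    nlinarith [sq_nonneg r]

lemma const_f {a b : ℚ[X]} (haR : a ∈ R) (hbR : b ∈ R) (hab : a * b = fP)
    (hda : a.natDegree = 0) : a = 1 ∨ a = -1 := by
  have ha' : a = C (a.coeff 0) := eq_C_of_natDegree_eq_zero hda
  obtain ⟨m, hm⟩ := intval R hR haR 0
  push_cast at hm
  have hcm : a.coeff 0 = (m:ℚ) := by rw [coeff_zero_eq_eval_zero]; exact hm
  have ea : ∀ x : ℚ, a.eval x = (m:ℚ) := fun x => by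
    conv_lhs => rw [ha']
    rw [eval_C, hcm]
  obtain ⟨m1, hm1⟩ := intval R hR hbR 1
  obtain ⟨m2, hm2⟩ := intval R hR hbR 2
  push_cast at hm1 hm2
  have e1 : a.eval 1 * b.eval 1 = 2 := by rw [← eval_mul, hab, eval_fP]; norm_num
  have e2 : a.eval 2 * b.eval 2 = 7 := by rw [← eval_mul, hab, eval_fP]; norm_num
  rw [ea 1, hm1] at e1
  rw [ea 2, hm2] at e2
  have z1 : m * m1 = 2 := by exact_mod_cast e1
  have z2 : m * m2 = 7 := by exact_mod_cast e2
  have hu : IsUnit m := IsUnit.of_mul_eq_one (a := m) (m2 - 3 * m1) (by linear_combination z2 - 3 * z1)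
  rcases Int.isUnit_iff.mp hu with h | h
  · left; rw [ha', hcm, h]; norm_num
  · right; rw [ha', hcm, h]; norm_num

lemma const_g {a b : ℚ[X]} (haR : a ∈ R) (hbR : b ∈ R) (hab : a * b = gP)
    (hda : a.natDegree = 0) : a = 1 ∨ a = -1 := by
  have ha' : a = C (a.coeff 0) := eq_C_of_natDegree_eq_zero hda
  obtain ⟨m, hm⟩ := intval R hR haR 0
  push_cast at hm
  have hcm : a.coeff 0 = (m:ℚ) := by rw [coeff_zero_eq_eval_zero]; exact hm
  have ea : ∀ x : ℚ, a.eval x = (m:ℚ) := fun x => by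
    conv_lhs => rw [ha']
    rw [eval_C, hcm]
  obtain ⟨m1, hm1⟩ := intval R hR hbR 1
  push_cast at hm1
  have e1 : a.eval 1 * b.eval 1 = 1 := by rw [← eval_mul, hab, eval_gP]; norm_num
  rw [ea 1, hm1] at e1
  have z1 : m * m1 = 1 := by exact_mod_cast e1
  have hu : IsUnit m := IsUnit.of_mul_eq_one (a := m) m1 z1
  rcases Int.isUnit_iff.mp hu with h | h
  · left; rw [ha', hcm, h]; norm_num
  · right; rw [ha', hcm, h]; norm_num

lemma const_h {a b : ℚ[X]} (haR : a ∈ R) (hbR : b ∈ R) (hab : a * b = hP)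
    (hda : a.natDegree = 0) : a = 1 ∨ a = -1 := by
  have ha' : a = C (a.coeff 0) := eq_C_of_natDegree_eq_zero hda
  obtain ⟨m, hm⟩ := intval R hR haR 0
  push_cast at hm
  have hcm : a.coeff 0 = (m:ℚ) := by rw [coeff_zero_eq_eval_zero]; exact hm
  have ea : ∀ x : ℚ, a.eval x = (m:ℚ) := fun x => by
    conv_lhs => rw [ha']
    rw [eval_C, hcm]
  obtain ⟨m0, hm0⟩ := intval R hR hbR 0
  obtain ⟨m1, hm1⟩ := intval R hR hbR 1
  push_cast at hm0 hm1
  have e0 : a.eval 0 * b.eval 0 = 3 := by rw [← eval_mul, hab, eval_hP]; norm_num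
  have e1 : a.eval 1 * b.eval 1 = 4 := by rw [← eval_mul, hab, eval_hP]; norm_num
  rw [ea 0, hm0] at e0
  rw [ea 1, hm1] at e1
  have z0 : m * m0 = 3 := by exact_mod_cast e0
  have z1 : m * m1 = 4 := by exact_mod_cast e1
  have hu : IsUnit m := IsUnit.of_mul_eq_one (a := m) (m1 - m0) (by linear_combination z1 - z0)
  rcases Int.isUnit_iff.mp hu with h | h
  · left; rw [ha', hcm, h]; norm_num
  · right; rw [ha', hcm, h]; norm_num

lemma key_f (a b : ℚ[X]) (haR : a ∈ R) (hbR : b ∈ R) (hab : a * b = fP) :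
    (a = 1 ∨ a = -1) ∨ (b = 1 ∨ b = -1) := by
  have ha0 : a ≠ 0 := by rintro rfl; rw [zero_mul] at hab; exact fP_ne hab.symm
  have hb0 : b ≠ 0 := by rintro rfl; rw [mul_zero] at hab; exact fP_ne hab.symm
  have hdeg : a.natDegree + b.natDegree = 3 := by
    rw [← natDegree_mul ha0 hb0, hab, natDegree_fP]
  by_cases h0 : a.natDegree = 0
  · exact Or.inl (const_f R hR haR hbR hab h0)
  by_cases h1 : b.natDegree = 0
  · exact Or.inr (const_f R hR hbR haR (by rw [mul_comm]; exact hab) h1)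
  exfalso
  rcases (show a.natDegree = 1 ∨ b.natDegree = 1 by omega) with h | h
  · exact no_lin_f R hR haR hbR hab h
  · exact no_lin_f R hR hbR haR (by rw [mul_comm]; exact hab) h

lemma key_g (a b : ℚ[X]) (haR : a ∈ R) (hbR : b ∈ R) (hab : a * b = gP) :
    (a = 1 ∨ a = -1) ∨ (b = 1 ∨ b = -1) := by
  have ha0 : a ≠ 0 := by rintro rfl; rw [zero_mul] at hab; exact gP_ne hab.symm
  have hb0 : b ≠ 0 := by rintro rfl; rw [mul_zero] at hab; exact gP_ne hab.symm
  have hdeg : a.natDegree + b.natDegree = 4 := by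
    rw [← natDegree_mul ha0 hb0, hab, natDegree_gP]
  by_cases h0 : a.natDegree = 0
  · exact Or.inl (const_g R hR haR hbR hab h0)
  by_cases h1 : b.natDegree = 0
  · exact Or.inr (const_g R hR hbR haR (by rw [mul_comm]; exact hab) h1)
  exfalso
  by_cases h2 : a.natDegree = 1
  · exact no_lin_g R hR haR hbR hab h2
  by_cases h3 : b.natDegree = 1
  · exact no_lin_g R hR hbR haR (by rw [mul_comm]; exact hab) h3
  have hda : a.natDegree = 2 := by omega
  have hdb : b.natDegree = 2 := by omega
  have h00 : a.eval 0 * b.eval 0 = 0 := by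
    rw [← eval_mul, hab, eval_gP]; norm_num
  rcases mul_eq_zero.mp h00 with hc | hc
  · exact no_quad_g R hR haR hbR hab hda hdb
      (by rw [coeff_zero_eq_eval_zero]; exact hc)
  · exact no_quad_g R hR hbR haR (by rw [mul_comm]; exact hab) hdb hda
      (by rw [coeff_zero_eq_eval_zero]; exact hc)

lemma key_h (a b : ℚ[X]) (haR : a ∈ R) (hbR : b ∈ R) (hab : a * b = hP) :
    (a = 1 ∨ a = -1) ∨ (b = 1 ∨ b = -1) := by
  have ha0 : a ≠ 0 := by rintro rfl; rw [zero_mul] at hab; exact hP_ne hab.symm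
  have hb0 : b ≠ 0 := by rintro rfl; rw [mul_zero] at hab; exact hP_ne hab.symm
  have hdeg : a.natDegree + b.natDegree = 2 := by
    rw [← natDegree_mul ha0 hb0, hab, natDegree_hP]
  by_cases h0 : a.natDegree = 0
  · exact Or.inl (const_h R hR haR hbR hab h0)
  by_cases h1 : b.natDegree = 0
  · exact Or.inr (const_h R hR hbR haR (by rw [mul_comm]; exact hab) h1)
  exfalso
  have hda : a.natDegree = 1 := by omega
  obtain ⟨hc1, hroot⟩ := lin_facts hda
  set r := -(a.coeff 0) / (a.coeff 1)
  have hfr : hP.eval r = 0 := by rw [← hab, eval_mul, hroot, zero_mul]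
  rw [eval_hP] at hfr
  nlinarith [sq_nonneg r]

end

theorem stmt_10 (R : Subring (Polynomial ℚ))
    (hR : ∀ f : Polynomial ℚ, f ∈ R ↔ ∀ n : ℤ, ∃ m : ℤ, f.eval (n : ℚ) = (m : ℚ)) :
    (Polynomial.C ((2 : ℚ))⁻¹ * (Polynomial.X * (Polynomial.X ^ 2 + Polynomial.C 3))) ∈ R ∧
    ∀ F : R, (F : Polynomial ℚ) =
        Polynomial.C ((2 : ℚ))⁻¹ * (Polynomial.X * (Polynomial.X ^ 2 + Polynomial.C 3)) →
      Irreducible F ∧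
      ∃ g h : R,
        (g : Polynomial ℚ) =
          Polynomial.C ((4 : ℚ))⁻¹ * (Polynomial.X ^ 2 * (Polynomial.X ^ 2 + Polynomial.C 3)) ∧
        (h : Polynomial ℚ) = Polynomial.X ^ 2 + Polynomial.C 3 ∧
        Irreducible g ∧ Irreducible h ∧ g * h = F ^ 2 ∧
        ¬ Multiset.Rel Associated ({g, h} : Multiset R) (Multiset.replicate 2 F) := by
  refine ⟨mem_fP R hR, ?_⟩
  intro F hF
  have hF' : (F : ℚ[X]) = fP := hF
  set g : R := ⟨gP, mem_gP R hR⟩ with hgdef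
  set h : R := ⟨hP, mem_hP R hR⟩ with hhdef
  have hFirr : Irreducible F := by
    apply irr_val R hR
    · rw [hF', natDegree_fP]; omega
    · intro a b ha hb hab
      exact key_f R hR a b ha hb (hab.trans hF')
  have hgirr : Irreducible g := by
    apply irr_val R hR
    · show gP.natDegree ≠ 0
      rw [natDegree_gP]; omega
    · intro a b ha hb hab
      exact key_g R hR a b ha hb hab
  have hhirr : Irreducible h := by
    apply irr_val R hR
    · show hP.natDegree ≠ 0
      rw [natDegree_hP]; omega
    · intro a b ha hb hab
      exact key_h R hR a b ha hb hab
  refine ⟨hFirr, g, h, rfl, rfl, hgirr, hhirr, ?_, ?_⟩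
  · apply Subtype.ext
    push_cast
    rw [hF']
    show gP * hP = fP ^ 2
    unfold gP hP fP
    rw [show (C (4:ℚ)⁻¹) = C (2:ℚ)⁻¹ * C (2:ℚ)⁻¹ by rw [← C_mul]; norm_num]
    ring
  · intro hrel
    rw [Multiset.rel_replicate_right] at hrel
    have hass : Associated g F := hrel.2 g (by simp)
    obtain ⟨u, hu⟩ := hass
    have huval : ((u : R) : ℚ[X]) = 1 ∨ ((u : R) : ℚ[X]) = -1 :=
      val_of_unit R hR u.isUnit
    have hv : gP * ((u : R) : ℚ[X]) = fP := by
      have := congrArg Subtype.val hu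
      push_cast at this
      rw [← hF']
      exact this
    have he := congrArg (Polynomial.eval (1:ℚ)) hv
    rw [eval_mul, eval_gP, eval_fP] at he
    rcases huval with h' | h' <;> rw [h'] at he <;> norm_num at he
end

section
/- Fix a prime number p and let R(p) = {g/p^n : g ∈ ℤ[x], n ≥ 0, g/p^n ∈ Int(ℤ)}. Then every prime number q ≠ p is a prime element of R(p). -/
open Polynomial

theorem stmt_11 (p : ℕ) (hp : p.Prime) (Rp : Subring (Polynomial ℚ))
    (hRp : ∀ f : Polynomial ℚ, f ∈ Rp ↔
      ((∀ n : ℤ, ∃ m : ℤ, f.eval (n : ℚ) = (m : ℚ)) ∧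
        ∃ (g : Polynomial ℤ) (k : ℕ),
          f = Polynomial.C (((p : ℚ)) ^ k)⁻¹ * g.map (Int.castRingHom ℚ)))
    (q : ℕ) (hq : q.Prime) (hqp : q ≠ p) :
    ∀ Q : Rp, (Q : Polynomial ℚ) = Polynomial.C (q : ℚ) → Prime Q := by
  intro Q hQ
  set f := Int.castRingHom ℚ with hf
  have hp0 : (p : ℚ) ≠ 0 := Nat.cast_ne_zero.mpr hp.pos.ne'
  have hπ : ∀ k : ℕ, ((C (p : ℚ)) ^ k) ≠ 0 :=
    fun k => pow_ne_zero _ (fun h => hp0 (by simpa using C_eq_zero.mp h))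
  have hclear : ∀ (F : Polynomial ℚ) (g : Polynomial ℤ) (k : ℕ),
      F = C (((p : ℚ)) ^ k)⁻¹ * g.map f → (C (p : ℚ)) ^ k * F = g.map f := by
    intro F g k h
    rw [h, ← mul_assoc, ← C_pow, ← C_mul, mul_inv_cancel₀ (pow_ne_zero k hp0), C_1, one_mul]
  have hcoprime : ∀ k : ℕ, IsCoprime (q : ℤ) ((p : ℤ) ^ k) := by
    intro k
    apply IsCoprime.pow_right
    rw [Int.isCoprime_iff_gcd_eq_one]
    simpa [Int.gcd_natCast_natCast] using (Nat.coprime_primes hq hp).mpr hqp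
  -- main divisibility lemma
  have main : ∀ (A : Rp) (a : Polynomial ℤ) (k : ℕ),
      (C (p : ℚ)) ^ k * (A : Polynomial ℚ) = (C (q : ℤ) * a).map f → Q ∣ A := by
    intro A a k h
    set G : Polynomial ℚ := C (((p : ℚ)) ^ k)⁻¹ * a.map f with hGdef
    have hGk : (C (p : ℚ)) ^ k * G = a.map f := hclear G a k rfl
    have hmapC : (C (q : ℤ) * a).map f = C (q : ℚ) * a.map f := by
      rw [Polynomial.map_mul, map_C]; norm_num [hf]
    have hA : (A : Polynomial ℚ) = C (q : ℚ) * G := by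
      apply mul_left_cancel₀ (hπ k)
      rw [h, hmapC, ← hGk]; ring
    have hAval := ((hRp A).mp A.2).1
    have hG : G ∈ Rp := by
      refine (hRp G).mpr ⟨?_, a, k, rfl⟩
      intro n
      obtain ⟨m, hm⟩ := hAval n
      have h1 : (q : ℚ) * G.eval (n : ℚ) = (m : ℚ) := by
        rw [← hm, hA]; simp
      have h2 : (p : ℚ) ^ k * G.eval (n : ℚ) = ((a.eval n : ℤ) : ℚ) := by
        have := congrArg (Polynomial.eval ((n : ℤ) : ℚ)) hGk
        simpa [eval_intCast_map] using this
      obtain ⟨u, v, huv⟩ := hcoprime k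
      refine ⟨u * m + v * a.eval n, ?_⟩
      have huv' : (u : ℚ) * q + v * (p : ℚ) ^ k = 1 := by exact_mod_cast huv
      push_cast
      linear_combination (-(G.eval (n : ℚ))) * huv' + (u : ℚ) * h1 + (v : ℚ) * h2
    refine ⟨⟨G, hG⟩, Subtype.ext ?_⟩
    show (A : Polynomial ℚ) = ((Q * ⟨G, hG⟩ : Rp) : Polynomial ℚ)
    push_cast
    rw [hQ]
    exact hA
  have hq0 : (q : ℚ) ≠ 0 := Nat.cast_ne_zero.mpr hq.pos.ne'
  refine ⟨?_, ?_, ?_⟩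
  · intro h0
    have : (Q : Polynomial ℚ) = 0 := by rw [h0]; rfl
    rw [hQ] at this
    exact hq0 (C_eq_zero.mp this)
  · intro hU
    obtain ⟨V, hV⟩ := isUnit_iff_exists_inv.mp hU
    have hv : (Q : Polynomial ℚ) * (V : Polynomial ℚ) = 1 := by
      exact_mod_cast congrArg (Subtype.val) hV
    rw [hQ] at hv
    obtain ⟨m, hm⟩ := ((hRp V).mp V.2).1 0
    have hm0 : (V : Polynomial ℚ).eval 0 = (m : ℚ) := by simpa using hm
    have hqm : (q : ℚ) * (m : ℚ) = 1 := by
      have := congrArg (Polynomial.eval (0 : ℚ)) hv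
      simpa [hm0] using this
    have hqm' : (q : ℤ) * m = 1 := by exact_mod_cast hqm
    have : (q : ℤ) = 1 := Int.eq_one_of_dvd_one (by positivity) ⟨m, hqm'.symm⟩
    exact hq.ne_one (by exact_mod_cast this)
  · rintro A B ⟨Cc, hCc⟩
    obtain ⟨-, a, k, ha⟩ := (hRp A).mp A.2
    obtain ⟨-, b, l, hb⟩ := (hRp B).mp B.2
    obtain ⟨-, c, m, hc⟩ := (hRp Cc).mp Cc.2
    have hA' := hclear _ a k ha
    have hB' := hclear _ b l hb
    have hC' := hclear _ c m hc
    have hmul : (A : Polynomial ℚ) * (B : Polynomial ℚ) = C (q : ℚ) * (Cc : Polynomial ℚ) := by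
      have h := congrArg (fun x : Rp => (x : Polynomial ℚ)) hCc
      simpa [hQ] using h
    have keyQ : (C (p : ℚ)) ^ m * (a.map f * b.map f) =
        C (q : ℚ) * c.map f * (C (p : ℚ)) ^ (k + l) := by
      linear_combination (-((C (p : ℚ)) ^ m * b.map f)) * hA' +
        (-((C (p : ℚ)) ^ (k + m) * (A : Polynomial ℚ))) * hB' +
        ((C (p : ℚ)) ^ (k + l + m)) * hmul + ((C (q : ℚ)) * (C (p : ℚ)) ^ (k + l)) * hC'
    have keyZ : (C (p : ℤ)) ^ m * (a * b) = C (q : ℤ) * c * (C (p : ℤ)) ^ (k + l) := by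
      apply Polynomial.map_injective f Int.cast_injective
      simpa [Polynomial.map_mul, Polynomial.map_pow, hf] using keyQ
    have primeC : Prime (C (q : ℤ)) := Polynomial.prime_C_iff.mpr (Nat.prime_iff_prime_int.mp hq)
    have hdvd : C (q : ℤ) ∣ (C (p : ℤ)) ^ m * (a * b) :=
      ⟨c * (C (p : ℤ)) ^ (k + l), by rw [keyZ]; ring⟩
    rcases (primeC.dvd_mul).mp hdvd with h1 | h2
    · exfalso
      have hcp : C (q : ℤ) ∣ C (p : ℤ) := primeC.dvd_of_dvd_pow h1
      obtain ⟨d, hd⟩ := hcp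
      have : (p : ℤ) = q * d.coeff 0 := by
        have := congrArg (fun g => Polynomial.coeff g 0) hd
        simpa using this
      have hdvdnat : q ∣ p := by
        have : (q : ℤ) ∣ (p : ℤ) := ⟨d.coeff 0, this⟩
        exact_mod_cast this
      exact hqp ((Nat.prime_dvd_prime_iff_eq hq hp).mp hdvdnat)
    · rcases (primeC.dvd_mul).mp h2 with h3 | h4
      · obtain ⟨a₁, ha₁⟩ := h3
        rw [ha₁] at hA'
        exact Or.inl (main A a₁ k hA')
      · obtain ⟨b₁, hb₁⟩ := h4
        rw [hb₁] at hB'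
        exact Or.inr (main B b₁ l hB')
end

section
/- Let G be an abelian group containing an element g of infinite order. In B(G), the sequences S = (3g)(−g)³, S' = (3g)²(−2g)³, and T = (−g)(−2g)(3g) are irreducible (minimal zero-sum sequences) and S·S' = T³; hence T is not absolutely irreducible. -/
/-- A minimal zero-sum sequence over the abelian group `G`. -/
def IsMinimalZeroSum {G : Type*} [AddCommGroup G] (s : Multiset G) : Prop :=
  s ≠ 0 ∧ s.sum = 0 ∧ ∀ t : Multiset G, t ≤ s → t.sum = 0 → t = 0 ∨ t = s

/-- Absolute irreducibility in the block monoid `B(G)`. -/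
def AbsIrredZS {G : Type*} [AddCommGroup G] (U : Multiset G) : Prop :=
  IsMinimalZeroSum U ∧ ∀ (n : ℕ) (L : Multiset (Multiset G)),
    (∀ t ∈ L, IsMinimalZeroSum t) → L.sum = n • U → L = Multiset.replicate n U

private lemma le_decomp3 {G : Type*} [AddCommGroup G] [DecidableEq G] {x y z : G}
    (hxy : x ≠ y) (hxz : x ≠ z) (hyz : y ≠ z) {p q r : ℕ} {t : Multiset G}
    (ht : t ≤ Multiset.replicate p x + Multiset.replicate q y + Multiset.replicate r z) :
    ∃ a b c, a ≤ p ∧ b ≤ q ∧ c ≤ r ∧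
      t = Multiset.replicate a x + Multiset.replicate b y + Multiset.replicate c z := by
  open Multiset in
  refine ⟨t.count x, t.count y, t.count z, ?_, ?_, ?_, ?_⟩
  · have := count_le_of_le x ht
    simpa [count_replicate, hxy, hxz, hyz, Ne.symm hxy, Ne.symm hxz, Ne.symm hyz] using this
  · have := count_le_of_le y ht
    simpa [count_replicate, hxy, hxz, hyz, Ne.symm hxy, Ne.symm hxz, Ne.symm hyz] using this
  · have := count_le_of_le z ht
    simpa [count_replicate, hxy, hxz, hyz, Ne.symm hxy, Ne.symm hxz, Ne.symm hyz] using this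
  · ext w
    by_cases hwx : w = x
    · simp [hwx, count_replicate, hxy, hxz, Ne.symm hxy, Ne.symm hxz]
    by_cases hwy : w = y
    · simp [hwy, count_replicate, hxy, hyz, Ne.symm hxy, Ne.symm hyz]
    by_cases hwz : w = z
    · simp [hwz, count_replicate, hxz, hyz, Ne.symm hxz, Ne.symm hyz]
    · have := count_le_of_le w ht
      simp [count_replicate, hwx, hwy, hwz, Ne.symm hwx, Ne.symm hwy, Ne.symm hwz] at this ⊢
      exact this

private lemma sumf {G : Type*} [AddCommGroup G] (g : G) (a b c : ℕ) :
    (Multiset.replicate a ((3:ℕ) • g) + Multiset.replicate b (-g)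
      + Multiset.replicate c (-((2:ℕ) • g))).sum = ((3*a - b - 2*c : ℤ)) • g := by
  simp only [Multiset.sum_add, Multiset.sum_replicate, smul_neg, smul_smul]
  rw [← natCast_zsmul g (a*3), ← natCast_zsmul g b, ← natCast_zsmul g (c*2)]
  rw [← neg_zsmul, ← neg_zsmul, ← add_zsmul, ← add_zsmul]
  congr 1
  push_cast
  ring

theorem stmt_17 {G : Type*} [AddCommGroup G] (g : G) (hg : addOrderOf g = 0) :
    IsMinimalZeroSum ((3 • g) ::ₘ Multiset.replicate 3 (-g)) ∧
    IsMinimalZeroSum (Multiset.replicate 2 (3 • g) + Multiset.replicate 3 (-(2 • g))) ∧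
    IsMinimalZeroSum ({-g, -(2 • g), 3 • g} : Multiset G) ∧
    ((3 • g) ::ₘ Multiset.replicate 3 (-g)) +
        (Multiset.replicate 2 (3 • g) + Multiset.replicate 3 (-(2 • g))) =
      3 • ({-g, -(2 • g), 3 • g} : Multiset G) ∧
    ¬ AbsIrredZS ({-g, -(2 • g), 3 • g} : Multiset G) := by
  classical
  open Multiset in
  have hinj : Function.Injective (fun n : ℤ => n • g) :=
    injective_zsmul_iff_not_isOfFinAddOrder.2 (addOrderOf_eq_zero_iff.mp hg)
  have key : ∀ m n : ℤ, m • g = n • g → m = n := fun m n h => hinj h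
  -- distinctness of the three elements
  have e3 : (3:ℕ) • g = (3:ℤ) • g := (natCast_zsmul g 3).symm
  have e1 : -g = (-1:ℤ) • g := by simp
  have e2 : -((2:ℕ) • g) = (-2:ℤ) • g := by
    rw [← natCast_zsmul g 2, ← neg_zsmul]; norm_num
  have hXY : (3:ℕ) • g ≠ -g := by
    rw [e3, e1]; intro h; have := key _ _ h; omega
  have hXZ : (3:ℕ) • g ≠ -((2:ℕ) • g) := by
    rw [e3, e2]; intro h; have := key _ _ h; omega
  have hYZ : -g ≠ -((2:ℕ) • g) := by
    rw [e1, e2]; intro h; have := key _ _ h; omega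
  -- the three sequences in replicate normal form
  have hS : ((3 • g) ::ₘ Multiset.replicate 3 (-g))
      = replicate 1 ((3:ℕ) • g) + replicate 3 (-g) + replicate 0 (-((2:ℕ) • g)) := by
    simp only [Multiset.insert_eq_cons, Multiset.replicate_succ, Multiset.replicate_zero,
      ← Multiset.singleton_add, add_zero]
  have hS' : (Multiset.replicate 2 (3 • g) + Multiset.replicate 3 (-(2 • g)))
      = replicate 2 ((3:ℕ) • g) + replicate 0 (-g) + replicate 3 (-((2:ℕ) • g)) := by
    simp only [Multiset.insert_eq_cons, Multiset.replicate_succ, Multiset.replicate_zero,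
      ← Multiset.singleton_add, add_zero]
  have hT : ({-g, -(2 • g), 3 • g} : Multiset G)
      = replicate 1 ((3:ℕ) • g) + replicate 1 (-g) + replicate 1 (-((2:ℕ) • g)) := by
    simp only [Multiset.insert_eq_cons, Multiset.replicate_succ, Multiset.replicate_zero,
      ← Multiset.singleton_add, add_zero]
    abel
  -- generic minimality lemma
  have gen : ∀ p q r : ℕ, (3*p - q - 2*r : ℤ) = 0 →
      (∀ a b c : ℕ, a ≤ p → b ≤ q → c ≤ r → (3*a - b - 2*c : ℤ) = 0 →
        (a = 0 ∧ b = 0 ∧ c = 0) ∨ (a = p ∧ b = q ∧ c = r)) →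
      (p, q, r) ≠ (0, 0, 0) →
      IsMinimalZeroSum (replicate p ((3:ℕ) • g) + replicate q (-g)
        + replicate r (-((2:ℕ) • g))) := by
    intro p q r hsum hsol hne
    refine ⟨?_, ?_, ?_⟩
    · intro h0
      have := congrArg Multiset.card h0
      simp [Multiset.card_replicate] at this
      exact hne (by simp [Prod.ext_iff]; omega)
    · rw [sumf, hsum, zero_zsmul]
    · intro t ht htsum
      obtain ⟨a, b, c, ha, hb, hc, rfl⟩ := le_decomp3 hXY hXZ hYZ ht
      rw [sumf] at htsum
      have h0 : (3*a - b - 2*c : ℤ) = 0 := key _ _ (by rw [htsum, zero_zsmul])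
      rcases hsol a b c ha hb hc h0 with ⟨rfl, rfl, rfl⟩ | ⟨rfl, rfl, rfl⟩
      · left; simp
      · right; rfl
  have hSmin : IsMinimalZeroSum ((3 • g) ::ₘ Multiset.replicate 3 (-g)) := by
    rw [hS]; exact gen 1 3 0 (by norm_num) (fun a b c ha hb hc h => by omega) (by simp)
  have hS'min : IsMinimalZeroSum (Multiset.replicate 2 (3 • g) + Multiset.replicate 3 (-(2 • g))) := by
    rw [hS']; exact gen 2 0 3 (by norm_num) (fun a b c ha hb hc h => by omega) (by simp)
  have hTmin : IsMinimalZeroSum ({-g, -(2 • g), 3 • g} : Multiset G) := by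
    rw [hT]; exact gen 1 1 1 (by norm_num) (fun a b c ha hb hc h => by omega) (by simp)
  have hprod : ((3 • g) ::ₘ Multiset.replicate 3 (-g)) +
        (Multiset.replicate 2 (3 • g) + Multiset.replicate 3 (-(2 • g))) =
      3 • ({-g, -(2 • g), 3 • g} : Multiset G) := by
    simp only [Multiset.insert_eq_cons, Multiset.replicate_succ, Multiset.replicate_zero,
      ← Multiset.singleton_add, add_zero]
    abel
  refine ⟨hSmin, hS'min, hTmin, hprod, ?_⟩
  rintro ⟨-, h⟩
  have := h 3 {((3 • g) ::ₘ Multiset.replicate 3 (-g)),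
      (Multiset.replicate 2 (3 • g) + Multiset.replicate 3 (-(2 • g)))}
    (by
      intro t htmem
      simp only [Multiset.insert_eq_cons, Multiset.mem_cons, Multiset.mem_singleton] at htmem
      rcases htmem with rfl | rfl
      · exact hSmin
      · exact hS'min)
    (by simpa using hprod)
  have hc := congrArg Multiset.card this
  simp at hc
end

section
/- Let n ≥ 2, G = ℤ^n with standard basis e₁,...,e_n, f = e₁ + ⋯ + e_n, and G₀ = {±e₁,...,±e_n, ±f}. Then the irreducible elements of the block monoid B(G₀) are exactly the sequences e_i(−e_i) for 1 ≤ i ≤ n, f(−f), U = e₁e₂⋯e_n(−f), and V = (−e₁)(−e₂)⋯(−e_n)f. Moreover U·V = (e₁(−e₁))⋯(e_n(−e_n))·(f(−f)), so B(G₀) is not half-factorial, and every irreducible of B(G₀) is absolutely irreducible. -/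
/-- A minimal zero-sum sequence over the subset `G₀` of the abelian group `G`:
a nonempty zero-sum multiset with entries in `G₀` and no proper nonempty zero-sum
submultiset. These are the irreducibles of the block monoid `B(G₀)`. -/
def IsMinimalZeroSumOn {G : Type*} [AddCommGroup G] (G₀ : Set G) (s : Multiset G) : Prop :=
  s ≠ 0 ∧ (∀ x ∈ s, x ∈ G₀) ∧ s.sum = 0 ∧
    ∀ t : Multiset G, t ≤ s → t.sum = 0 → t = 0 ∨ t = s

/-- Absolute irreducibility in the block monoid `B(G₀)`. -/
def AbsIrredZSOn {G : Type*} [AddCommGroup G] (G₀ : Set G) (U : Multiset G) : Prop :=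
  IsMinimalZeroSumOn G₀ U ∧ ∀ (n : ℕ) (L : Multiset (Multiset G)),
    (∀ t ∈ L, IsMinimalZeroSumOn G₀ t) → L.sum = n • U → L = Multiset.replicate n U

theorem stmt_18 (n : ℕ) (hn : 2 ≤ n)
    (e : Fin n → (Fin n → ℤ)) (he : ∀ i, e i = Pi.single i 1)
    (f : Fin n → ℤ) (hf : f = fun _ => 1)
    (G₀ : Set (Fin n → ℤ))
    (hG₀ : G₀ = {x | (∃ i, x = e i ∨ x = -e i) ∨ x = f ∨ x = -f})
    (U V : Multiset (Fin n → ℤ))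
    (hU : U = (-f) ::ₘ Multiset.map e Finset.univ.val)
    (hV : V = f ::ₘ Multiset.map (fun i => -e i) Finset.univ.val) :
    (∀ s : Multiset (Fin n → ℤ), IsMinimalZeroSumOn G₀ s ↔
      ((∃ i, s = {e i, -e i}) ∨ s = {f, -f} ∨ s = U ∨ s = V)) ∧
    U + V = (∑ i, ({e i, -e i} : Multiset (Fin n → ℤ))) + {f, -f} ∧
    ¬ (∀ L₁ L₂ : Multiset (Multiset (Fin n → ℤ)),
        (∀ t ∈ L₁, IsMinimalZeroSumOn G₀ t) → (∀ t ∈ L₂, IsMinimalZeroSumOn G₀ t) →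
        L₁.sum = L₂.sum → Multiset.card L₁ = Multiset.card L₂) ∧
    (∀ W : Multiset (Fin n → ℤ), IsMinimalZeroSumOn G₀ W → AbsIrredZSOn G₀ W) := by
  classical
  have hmem : ∀ x, x ∈ G₀ ↔ (∃ i, x = e i ∨ x = -e i) ∨ x = f ∨ x = -f := by
    intro x; rw [hG₀]; rfl
  have vE : ∀ i j, e i j = if j = i then (1:ℤ) else 0 := by
    intro i j; rw [he]; simp [Pi.single_apply]
  have vF : ∀ j, f j = 1 := by intro j; rw [hf]
  have heq : ∀ i j, e i = e j ↔ i = j := by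
    intro i j
    constructor
    · intro h
      have h2 := congrFun h i
      rw [vE, vE, if_pos rfl] at h2
      split_ifs at h2 with h3
      · exact h3
      · exact absurd h2 one_ne_zero
    · rintro rfl; rfl
  have heInj : Function.Injective e := fun i j h => (heq i j).mp h
  have n_ene : ∀ i j, e i ≠ -e j := by
    intro i j h
    have h2 := congrFun h i
    rw [vE, Pi.neg_apply, vE, if_pos rfl] at h2
    split_ifs at h2 <;> omega
  have n_ef : ∀ i, e i ≠ f := by
    intro i h
    have : Nontrivial (Fin n) := Fin.nontrivial_iff_two_le.mpr hn
    obtain ⟨j, hj⟩ := exists_ne i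
    have h2 := congrFun h j
    rw [vE, vF, if_neg hj] at h2
    exact zero_ne_one h2
  have n_enf : ∀ i, e i ≠ -f := by
    intro i h
    have h2 := congrFun h i
    rw [vE, Pi.neg_apply, vF, if_pos rfl] at h2
    omega
  have n_fnf : f ≠ -f := by
    intro h
    have h2 := congrFun h ⟨0, by omega⟩
    rw [vF, Pi.neg_apply, vF] at h2
    omega
  have n_nee : ∀ i j, -e i ≠ e j := fun i j h => n_ene j i h.symm
  have n_fe : ∀ i, f ≠ e i := fun i h => n_ef i h.symm
  have n_nfe : ∀ i, -f ≠ e i := fun i h => n_enf i h.symm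
  have n_nef : ∀ i, -e i ≠ f := fun i h => n_enf i (neg_eq_iff_eq_neg.mp h)
  have n_fne : ∀ i, f ≠ -e i := fun i h => n_nef i h.symm
  have n_nenf : ∀ i, -e i ≠ -f := fun i h => n_ef i (neg_injective h)
  have n_nfne : ∀ i, -f ≠ -e i := fun i h => n_nenf i h.symm
  have n_nff : -f ≠ f := fun h => n_fnf h.symm
  have hne0 : ∀ i, e i ≠ 0 := by
    intro i h
    have h2 := congrFun h i
    rw [vE, if_pos rfl] at h2
    exact one_ne_zero h2
  have hf0 : f ≠ 0 := by
    intro h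
    have h2 := congrFun h ⟨0, by omega⟩
    rw [vF] at h2
    exact one_ne_zero h2
  -- sum of a coordinate in terms of counts
  have msum_apply : ∀ (s : Multiset (Fin n → ℤ)) (j : Fin n),
      s.sum j = (s.map (fun x => x j)).sum := by
    intro s j
    induction s using Multiset.induction with
    | empty => simp
    | cons a s ih => simp [ih]
  have sumCoord : ∀ s : Multiset (Fin n → ℤ), (∀ x ∈ s, x ∈ G₀) → ∀ j,
      (s.map (fun x => x j)).sum =
        (s.count (e j) : ℤ) - s.count (-e j) + s.count f - s.count (-f) := by
    intro s
    induction s using Multiset.induction with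
    | empty => intro _ j; simp
    | cons a s ih =>
      intro hs j
      have ha := (hmem a).mp (hs a (Multiset.mem_cons_self a s))
      have ihs := ih (fun x hx => hs x (Multiset.mem_cons_of_mem hx)) j
      simp only [Multiset.map_cons, Multiset.sum_cons, Multiset.count_cons, ihs]
      obtain ⟨i, rfl | rfl⟩ | rfl | rfl := ha
      · simp only [vE, heq, n_nee, n_fe, n_nfe, if_false]
        split_ifs <;> push_cast <;> ring
      · simp only [Pi.neg_apply, vE, n_ene, n_fne, n_nfne, neg_inj, heq, if_false]
        split_ifs <;> push_cast <;> ring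
      · simp only [vF, n_ef, n_nef, n_nff, if_false, if_pos rfl]
        push_cast; ring
      · simp only [Pi.neg_apply, vF, n_enf, n_nenf, n_fnf, if_false, if_pos rfl]
        push_cast; ring
  have keyEq : ∀ s : Multiset (Fin n → ℤ), (∀ x ∈ s, x ∈ G₀) → s.sum = 0 → ∀ j,
      (s.count (e j) : ℤ) - s.count (-e j) = (s.count (-f) : ℤ) - s.count f := by
    intro s hs h0 j
    have h1 := sumCoord s hs j
    rw [← msum_apply, h0] at h1
    simp only [Pi.zero_apply] at h1
    linarith
  -- facts about U
  have hUne : U ≠ 0 := by rw [hU]; exact Multiset.cons_ne_zero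
  have memU : ∀ x, x ∈ U ↔ x = -f ∨ ∃ i, x = e i := by
    intro x
    rw [hU]
    simp only [Multiset.mem_cons, Multiset.mem_map, Finset.mem_val, Finset.mem_univ, true_and]
    constructor
    · rintro (rfl | ⟨i, rfl⟩)
      · exact Or.inl rfl
      · exact Or.inr ⟨i, rfl⟩
    · rintro (rfl | ⟨i, rfl⟩)
      · exact Or.inl rfl
      · exact Or.inr ⟨i, rfl⟩
  have hUG₀ : ∀ x ∈ U, x ∈ G₀ := by
    intro x hx
    rw [hmem]
    rcases (memU x).mp hx with h | ⟨i, h⟩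
    · exact Or.inr (Or.inr h)
    · exact Or.inl ⟨i, Or.inl h⟩
  have hMnodup : (Multiset.map e Finset.univ.val).Nodup :=
    Multiset.Nodup.map heInj Finset.univ.nodup
  have cU_e : ∀ i, Multiset.count (e i) U = 1 := by
    intro i
    rw [hU, Multiset.count_cons, if_neg (n_enf i),
      Multiset.count_eq_one_of_mem hMnodup (Multiset.mem_map.mpr ⟨i, by simp, rfl⟩)]
  have cU_nf : Multiset.count (-f) U = 1 := by
    have h1 : -f ∉ Multiset.map e Finset.univ.val := by
      intro h
      obtain ⟨i, -, hi⟩ := Multiset.mem_map.mp h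
      exact n_enf i hi
    rw [hU, Multiset.count_cons, if_pos rfl, Multiset.count_eq_zero_of_notMem h1]
  have cU_0 : ∀ x, (∀ i, x ≠ e i) → x ≠ -f → Multiset.count x U = 0 := by
    intro x h1 h2
    have h3 : x ∉ Multiset.map e Finset.univ.val := by
      intro h
      obtain ⟨i, -, hi⟩ := Multiset.mem_map.mp h
      exact h1 i hi.symm
    rw [hU, Multiset.count_cons, if_neg h2, Multiset.count_eq_zero_of_notMem h3]
  have hsumE : ∑ i, e i = f := by
    have h1 := Finset.univ_sum_single (fun _ : Fin n => (1:ℤ))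
    simp only [he]
    rw [hf]
    exact h1
  have hsumU : U.sum = 0 := by
    rw [hU, Multiset.sum_cons,
      show (Multiset.map e Finset.univ.val).sum = ∑ i, e i from
        (Finset.sum_eq_multiset_sum _ _).symm, hsumE, neg_add_cancel]
  -- facts about V
  have hVne : V ≠ 0 := by rw [hV]; exact Multiset.cons_ne_zero
  have memV : ∀ x, x ∈ V ↔ x = f ∨ ∃ i, x = -e i := by
    intro x
    rw [hV]
    simp only [Multiset.mem_cons, Multiset.mem_map, Finset.mem_val, Finset.mem_univ, true_and]
    constructor
    · rintro (rfl | ⟨i, rfl⟩)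
      · exact Or.inl rfl
      · exact Or.inr ⟨i, rfl⟩
    · rintro (rfl | ⟨i, rfl⟩)
      · exact Or.inl rfl
      · exact Or.inr ⟨i, rfl⟩
  have hVG₀ : ∀ x ∈ V, x ∈ G₀ := by
    intro x hx
    rw [hmem]
    rcases (memV x).mp hx with h | ⟨i, h⟩
    · exact Or.inr (Or.inl h)
    · exact Or.inl ⟨i, Or.inr h⟩
  have hNInj : Function.Injective (fun i => -e i) := fun i j h => heInj (neg_injective h)
  have hNnodup : (Multiset.map (fun i => -e i) Finset.univ.val).Nodup :=
    Multiset.Nodup.map hNInj Finset.univ.nodup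
  have cV_ne : ∀ i, Multiset.count (-e i) V = 1 := by
    intro i
    rw [hV, Multiset.count_cons, if_neg (n_nef i),
      Multiset.count_eq_one_of_mem hNnodup (Multiset.mem_map.mpr ⟨i, by simp, rfl⟩)]
  have cV_f : Multiset.count f V = 1 := by
    have h1 : f ∉ Multiset.map (fun i => -e i) Finset.univ.val := by
      intro h
      obtain ⟨i, -, hi⟩ := Multiset.mem_map.mp h
      exact n_nef i hi
    rw [hV, Multiset.count_cons, if_pos rfl, Multiset.count_eq_zero_of_notMem h1]
  have cV_0 : ∀ x, (∀ i, x ≠ -e i) → x ≠ f → Multiset.count x V = 0 := by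
    intro x h1 h2
    have h3 : x ∉ Multiset.map (fun i => -e i) Finset.univ.val := by
      intro h
      obtain ⟨i, -, hi⟩ := Multiset.mem_map.mp h
      exact h1 i hi.symm
    rw [hV, Multiset.count_cons, if_neg h2, Multiset.count_eq_zero_of_notMem h3]
  have hsumV : V.sum = 0 := by
    rw [hV, Multiset.sum_cons,
      show (Multiset.map (fun i => -e i) Finset.univ.val).sum = ∑ i, -e i from
        (Finset.sum_eq_multiset_sum _ _).symm]
    rw [show (∑ i, -e i) = -∑ i, e i from by rw [Finset.sum_neg_distrib], hsumE,
      add_neg_cancel]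
  -- minimality of U
  have hUmin : IsMinimalZeroSumOn G₀ U := by
    refine ⟨hUne, hUG₀, hsumU, ?_⟩
    intro t ht h0
    have htc := Multiset.le_iff_count.mp ht
    have htG : ∀ x ∈ t, x ∈ G₀ := fun x hx => hUG₀ x (Multiset.mem_of_le ht hx)
    have hkey := keyEq t htG h0
    have hne' : ∀ j, Multiset.count (-e j) t = 0 := fun j =>
      Nat.le_zero.mp ((htc _).trans_eq (cU_0 _ (fun i => n_nee j i) (n_nenf j)))
    have hcf : Multiset.count f t = 0 :=
      Nat.le_zero.mp ((htc f).trans_eq (cU_0 f (fun i => n_fe i) n_fnf))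
    have hδ : ∀ j, Multiset.count (e j) t = Multiset.count (-f) t := by
      intro j
      have h1 := hkey j
      rw [hne' j, hcf] at h1
      push_cast at h1
      omega
    by_cases hδ0 : Multiset.count (-f) t = 0
    · left
      by_contra htne
      obtain ⟨x, hx⟩ := Multiset.exists_mem_of_ne_zero htne
      have hpos := Multiset.count_pos.mpr hx
      rcases (memU x).mp (Multiset.mem_of_le ht hx) with rfl | ⟨i, rfl⟩
      · omega
      · rw [hδ i] at hpos; omega
    · right
      have hδ1 : Multiset.count (-f) t = 1 :=
        le_antisymm ((htc (-f)).trans_eq cU_nf) (Nat.one_le_iff_ne_zero.mpr hδ0)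
      refine Multiset.ext.mpr fun x => ?_
      by_cases hx1 : x = -f
      · rw [hx1, cU_nf, hδ1]
      · by_cases hx2 : ∃ i, x = e i
        · obtain ⟨i, rfl⟩ := hx2
          rw [hδ i, hδ1, cU_e]
        · push_neg at hx2
          rw [cU_0 x hx2 hx1]
          exact Nat.le_zero.mp ((htc x).trans_eq (cU_0 x hx2 hx1))
  -- minimality of V
  have hVmin : IsMinimalZeroSumOn G₀ V := by
    refine ⟨hVne, hVG₀, hsumV, ?_⟩
    intro t ht h0
    have htc := Multiset.le_iff_count.mp ht
    have htG : ∀ x ∈ t, x ∈ G₀ := fun x hx => hVG₀ x (Multiset.mem_of_le ht hx)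
    have hkey := keyEq t htG h0
    have hne' : ∀ j, Multiset.count (e j) t = 0 := fun j =>
      Nat.le_zero.mp ((htc _).trans_eq (cV_0 _ (fun i => n_ene j i) (n_ef j)))
    have hcnf : Multiset.count (-f) t = 0 :=
      Nat.le_zero.mp ((htc (-f)).trans_eq (cV_0 (-f) (fun i => n_nfne i) n_nff))
    have hδ : ∀ j, Multiset.count (-e j) t = Multiset.count f t := by
      intro j
      have h1 := hkey j
      rw [hne' j, hcnf] at h1
      push_cast at h1
      omega
    by_cases hδ0 : Multiset.count f t = 0
    · left
      by_contra htne
      obtain ⟨x, hx⟩ := Multiset.exists_mem_of_ne_zero htne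
      have hpos := Multiset.count_pos.mpr hx
      rcases (memV x).mp (Multiset.mem_of_le ht hx) with rfl | ⟨i, rfl⟩
      · omega
      · rw [hδ i] at hpos; omega
    · right
      have hδ1 : Multiset.count f t = 1 :=
        le_antisymm ((htc f).trans_eq cV_f) (Nat.one_le_iff_ne_zero.mpr hδ0)
      refine Multiset.ext.mpr fun x => ?_
      by_cases hx1 : x = f
      · rw [hx1, cV_f, hδ1]
      · by_cases hx2 : ∃ i, x = -e i
        · obtain ⟨i, rfl⟩ := hx2
          rw [hδ i, hδ1, cV_ne]
        · push_neg at hx2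
          rw [cV_0 x hx2 hx1]
          exact Nat.le_zero.mp ((htc x).trans_eq (cV_0 x hx2 hx1))
  -- minimality of pairs
  have pairMin : ∀ x : Fin n → ℤ, x ∈ G₀ → -x ∈ G₀ → x ≠ 0 →
      IsMinimalZeroSumOn G₀ ({x, -x} : Multiset (Fin n → ℤ)) := by
    intro x hx hx' h0
    have hmem2 : ∀ y ∈ ({x, -x} : Multiset (Fin n → ℤ)), y ∈ G₀ := by
      intro y hy
      simp only [Multiset.insert_eq_cons, Multiset.mem_cons, Multiset.mem_singleton] at hy
      rcases hy with rfl | rfl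
      exacts [hx, hx']
    refine ⟨by simp, hmem2, by simp, ?_⟩
    intro t ht hts
    have hc : Multiset.card t ≤ 2 := by
      have h1 := Multiset.card_le_card ht
      simpa using h1
    obtain h0' | h1 | h2 : Multiset.card t = 0 ∨ Multiset.card t = 1 ∨ Multiset.card t = 2 := by
      omega
    · left; exact Multiset.card_eq_zero.mp h0'
    · obtain ⟨y, rfl⟩ := Multiset.card_eq_one.mp h1
      have hy : y ∈ ({x, -x} : Multiset (Fin n → ℤ)) :=
        Multiset.mem_of_le ht (Multiset.mem_singleton_self y)
      rw [Multiset.sum_singleton] at hts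
      simp only [Multiset.insert_eq_cons, Multiset.mem_cons, Multiset.mem_singleton] at hy
      rcases hy with rfl | rfl
      · exact absurd hts h0
      · exact absurd hts (neg_ne_zero.mpr h0)
    · right; exact Multiset.eq_of_le_of_card_le ht (by simp [h2])
  have cPair : ∀ a b y : Fin n → ℤ, Multiset.count y ({a, b} : Multiset (Fin n → ℤ)) =
      (if y = b then 1 else 0) + (if y = a then 1 else 0) := by
    intro a b y
    rw [Multiset.insert_eq_cons, Multiset.count_cons, Multiset.count_singleton]
  -- Part 1: characterization of minimal zero-sum sequences
  have part1 : ∀ s : Multiset (Fin n → ℤ), IsMinimalZeroSumOn G₀ s ↔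
      ((∃ i, s = {e i, -e i}) ∨ s = {f, -f} ∨ s = U ∨ s = V) := by
    intro s
    constructor
    · rintro ⟨hs0, hsG, hssum, hsmin⟩
      have hkey := keyEq s hsG hssum
      rcases lt_trichotomy ((Multiset.count (-f) s : ℤ) - Multiset.count f s) 0 with
        hneg | hzero | hpos
      · -- V ≤ s
        right; right; right
        have hbj : ∀ j, 1 ≤ Multiset.count (-e j) s := by
          intro j
          have h1 := hkey j
          omega
        have hcf : 1 ≤ Multiset.count f s := by omega
        have hVle : V ≤ s := by
          rw [Multiset.le_iff_count]
          intro x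
          by_cases h1 : x = f
          · rw [h1, cV_f]; exact hcf
          · by_cases h2 : ∃ i, x = -e i
            · obtain ⟨i, rfl⟩ := h2
              rw [cV_ne]; exact hbj i
            · push_neg at h2
              rw [cV_0 x h2 h1]
              exact Nat.zero_le _
        rcases hsmin V hVle hsumV with h | h
        · exact absurd h hVne
        · exact h.symm
      · -- all counts balanced
        have hadb : ∀ j, Multiset.count (e j) s = Multiset.count (-e j) s := by
          intro j
          have h1 := hkey j
          omega
        have hcd : Multiset.count f s = Multiset.count (-f) s := by omega
        by_cases ha : ∃ j, 0 < Multiset.count (e j) s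
        · obtain ⟨j, hj⟩ := ha
          left; refine ⟨j, ?_⟩
          have hle : ({e j, -e j} : Multiset (Fin n → ℤ)) ≤ s := by
            rw [Multiset.le_iff_count]
            intro x
            rw [cPair]
            split_ifs with h1 h2 h3
            · rw [h2] at h1; exact absurd h1 (n_ene j j)
            · rw [h1]; have := hadb j; omega
            · rw [h3]; omega
            · exact Nat.zero_le _
          rcases hsmin _ hle (by simp) with h | h
          · exact absurd h (by simp)
          · exact h.symm
        · by_cases hc : 0 < Multiset.count f s
          · right; left
            have hle : ({f, -f} : Multiset (Fin n → ℤ)) ≤ s := by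
              rw [Multiset.le_iff_count]
              intro x
              rw [cPair]
              split_ifs with h1 h2 h3
              · rw [h2] at h1; exact absurd h1 n_fnf
              · rw [h1]; omega
              · rw [h3]; omega
              · exact Nat.zero_le _
            rcases hsmin _ hle (by simp) with h | h
            · exact absurd h (by simp)
            · exact h.symm
          · exfalso
            push_neg at ha hc
            obtain ⟨x, hx⟩ := Multiset.exists_mem_of_ne_zero hs0
            have hpos := Multiset.count_pos.mpr hx
            rcases (hmem x).mp (hsG x hx) with ⟨i, rfl | rfl⟩ | rfl | rfl
            · have := ha i; omega
            · have h1 := ha i; rw [← hadb i] at hpos; omega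
            · omega
            · omega
      · -- U ≤ s
        right; right; left
        have haj : ∀ j, 1 ≤ Multiset.count (e j) s := by
          intro j
          have h1 := hkey j
          omega
        have hcnf : 1 ≤ Multiset.count (-f) s := by omega
        have hUle : U ≤ s := by
          rw [Multiset.le_iff_count]
          intro x
          by_cases h1 : x = -f
          · rw [h1, cU_nf]; exact hcnf
          · by_cases h2 : ∃ i, x = e i
            · obtain ⟨i, rfl⟩ := h2
              rw [cU_e]; exact haj i
            · push_neg at h2
              rw [cU_0 x h2 h1]
              exact Nat.zero_le _
        rcases hsmin U hUle hsumU with h | h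
        · exact absurd h hUne
        · exact h.symm
    · rintro (⟨i, rfl⟩ | rfl | rfl | rfl)
      · exact pairMin (e i) ((hmem _).mpr (Or.inl ⟨i, Or.inl rfl⟩))
          ((hmem _).mpr (Or.inl ⟨i, Or.inr rfl⟩)) (hne0 i)
      · exact pairMin f ((hmem _).mpr (Or.inr (Or.inl rfl)))
          ((hmem _).mpr (Or.inr (Or.inr rfl))) hf0
      · exact hUmin
      · exact hVmin
  -- Part 2
  have singSum : ∀ g : Fin n → (Fin n → ℤ),
      ∑ i, ({g i} : Multiset (Fin n → ℤ)) = Multiset.map g Finset.univ.val := by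
    intro g
    rw [Finset.sum_eq_multiset_sum]
    have h1 : ∀ m : Multiset (Fin n),
        ((m.map (fun i => ({g i} : Multiset (Fin n → ℤ)))).sum) = m.map g := by
      intro m
      induction m using Multiset.induction with
      | empty => simp
      | cons a m ih => simp [ih]
    exact h1 _
  have part2 : U + V = (∑ i, ({e i, -e i} : Multiset (Fin n → ℤ))) + {f, -f} := by
    have h1 : ∑ i, ({e i, -e i} : Multiset (Fin n → ℤ)) =
        Multiset.map e Finset.univ.val + Multiset.map (fun i => -e i) Finset.univ.val := by
      rw [← singSum e, ← singSum (fun i => -e i), ← Finset.sum_add_distrib]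
      refine Finset.sum_congr rfl fun i _ => ?_
      rw [Multiset.insert_eq_cons, ← Multiset.singleton_add]
    rw [hU, hV, h1, Multiset.insert_eq_cons, ← Multiset.singleton_add,
      ← Multiset.singleton_add, ← Multiset.singleton_add f]
    abel
  -- Part 3
  have part3 : ¬ (∀ L₁ L₂ : Multiset (Multiset (Fin n → ℤ)),
      (∀ t ∈ L₁, IsMinimalZeroSumOn G₀ t) → (∀ t ∈ L₂, IsMinimalZeroSumOn G₀ t) →
      L₁.sum = L₂.sum → Multiset.card L₁ = Multiset.card L₂) := by
    intro H
    have hL1 : ∀ t ∈ ({U, V} : Multiset (Multiset (Fin n → ℤ))), IsMinimalZeroSumOn G₀ t := by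
      intro t ht
      simp only [Multiset.insert_eq_cons, Multiset.mem_cons, Multiset.mem_singleton] at ht
      rcases ht with rfl | rfl
      exacts [hUmin, hVmin]
    have hL2 : ∀ t ∈ (({f, -f} : Multiset (Fin n → ℤ)) ::ₘ
        Finset.univ.val.map (fun i => ({e i, -e i} : Multiset (Fin n → ℤ)))),
        IsMinimalZeroSumOn G₀ t := by
      intro t ht
      rcases Multiset.mem_cons.mp ht with rfl | hmem'
      · exact (part1 _).mpr (Or.inr (Or.inl rfl))
      · obtain ⟨i, -, rfl⟩ := Multiset.mem_map.mp hmem'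
        exact (part1 _).mpr (Or.inl ⟨i, rfl⟩)
    have hsums : ({U, V} : Multiset (Multiset (Fin n → ℤ))).sum =
        (({f, -f} : Multiset (Fin n → ℤ)) ::ₘ
          Finset.univ.val.map (fun i => ({e i, -e i} : Multiset (Fin n → ℤ)))).sum := by
      rw [Multiset.sum_cons,
        show (Finset.univ.val.map (fun i => ({e i, -e i} : Multiset (Fin n → ℤ)))).sum =
          ∑ i, ({e i, -e i} : Multiset (Fin n → ℤ)) from
          (Finset.sum_eq_multiset_sum _ _).symm]
      have h2 : ({U, V} : Multiset (Multiset (Fin n → ℤ))).sum = U + V := by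
        simp [Multiset.insert_eq_cons]
      rw [h2, part2, add_comm]
    have hcard := H _ _ hL1 hL2 hsums
    simp only [Multiset.insert_eq_cons, Multiset.card_cons, Multiset.card_singleton,
      Multiset.card_map] at hcard
    have hcv : Multiset.card (Finset.univ.val : Multiset (Fin n)) = n := by simp
    rw [hcv] at hcard
    omega
  -- Part 4
  have part4 : ∀ W : Multiset (Fin n → ℤ), IsMinimalZeroSumOn G₀ W → AbsIrredZSOn G₀ W := by
    intro W hW
    refine ⟨hW, ?_⟩
    intro m L hL hLsum
    rcases Nat.eq_zero_or_pos m with rfl | hm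
    · rw [zero_nsmul] at hLsum
      rw [Multiset.replicate_zero]
      by_contra hL0
      obtain ⟨t, htL⟩ := Multiset.exists_mem_of_ne_zero hL0
      have h1 : t ≤ L.sum := Multiset.le_sum_of_mem htL
      rw [hLsum] at h1
      exact (hL t htL).1 (Multiset.le_zero.mp h1)
    · have hmemW : ∀ t ∈ L, ∀ x ∈ t, x ∈ W := by
        intro t htL x hx
        have h1 : x ∈ L.sum := Multiset.mem_of_le (Multiset.le_sum_of_mem htL) hx
        rw [hLsum] at h1
        exact (Multiset.mem_nsmul.mp h1).2
      have memPair : ∀ a b x : Fin n → ℤ, x ∈ ({a, b} : Multiset (Fin n → ℤ)) ↔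
          x = a ∨ x = b := by
        intro a b x
        simp [Multiset.insert_eq_cons]
      have i₀ : Fin n := ⟨0, by omega⟩
      have hallW : ∀ t ∈ L, t = W := by
        intro t htL
        have htW := hmemW t htL
        rcases (part1 W).mp hW with ⟨i, rfl⟩ | rfl | rfl | rfl <;>
          rcases (part1 t).mp (hL t htL) with ⟨j, rfl⟩ | rfl | rfl | rfl
        · -- both pairs
          have h1 := htW (e j) ((memPair _ _ _).mpr (Or.inl rfl))
          rcases (memPair _ _ _).mp h1 with h2 | h2
          · rw [(heq j i).mp h2]
          · exact absurd h2 (n_ene j i)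
        · have h1 := htW f ((memPair _ _ _).mpr (Or.inl rfl))
          rcases (memPair _ _ _).mp h1 with h2 | h2
          · exact absurd h2 (n_fe i)
          · exact absurd h2 (n_fne i)
        · have h1 := htW (-f) ((memU _).mpr (Or.inl rfl))
          rcases (memPair _ _ _).mp h1 with h2 | h2
          · exact absurd h2 (n_nfe i)
          · exact absurd h2 (n_nfne i)
        · have h1 := htW f ((memV _).mpr (Or.inl rfl))
          rcases (memPair _ _ _).mp h1 with h2 | h2
          · exact absurd h2 (n_fe i)
          · exact absurd h2 (n_fne i)
        · have h1 := htW (e j) ((memPair _ _ _).mpr (Or.inl rfl))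
          rcases (memPair _ _ _).mp h1 with h2 | h2
          · exact absurd h2 (n_ef j)
          · exact absurd h2 (n_enf j)
        · rfl
        · have h1 := htW (e i₀) ((memU _).mpr (Or.inr ⟨i₀, rfl⟩))
          rcases (memPair _ _ _).mp h1 with h2 | h2
          · exact absurd h2 (n_ef i₀)
          · exact absurd h2 (n_enf i₀)
        · have h1 := htW (-e i₀) ((memV _).mpr (Or.inr ⟨i₀, rfl⟩))
          rcases (memPair _ _ _).mp h1 with h2 | h2
          · exact absurd h2 (n_nef i₀)
          · exact absurd h2 (n_nenf i₀)
        · have h1 := htW (-e j) ((memPair _ _ _).mpr (Or.inr rfl))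
          rcases (memU _).mp h1 with h2 | ⟨i, h2⟩
          · exact absurd h2 (n_nenf j)
          · exact absurd h2 (n_nee j i)
        · have h1 := htW f ((memPair _ _ _).mpr (Or.inl rfl))
          rcases (memU _).mp h1 with h2 | ⟨i, h2⟩
          · exact absurd h2 n_fnf
          · exact absurd h2 (n_fe i)
        · rfl
        · have h1 := htW f ((memV _).mpr (Or.inl rfl))
          rcases (memU _).mp h1 with h2 | ⟨i, h2⟩
          · exact absurd h2 n_fnf
          · exact absurd h2 (n_fe i)
        · have h1 := htW (e j) ((memPair _ _ _).mpr (Or.inl rfl))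
          rcases (memV _).mp h1 with h2 | ⟨i, h2⟩
          · exact absurd h2 (n_ef j)
          · exact absurd h2 (n_ene j i)
        · have h1 := htW (-f) ((memPair _ _ _).mpr (Or.inr rfl))
          rcases (memV _).mp h1 with h2 | ⟨i, h2⟩
          · exact absurd h2 n_nff
          · exact absurd h2 (n_nfne i)
        · have h1 := htW (-f) ((memU _).mpr (Or.inl rfl))
          rcases (memV _).mp h1 with h2 | ⟨i, h2⟩
          · exact absurd h2 n_nff
          · exact absurd h2 (n_nfne i)
        · rfl
      have hrep : L = Multiset.replicate (Multiset.card L) W :=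
        Multiset.eq_replicate_card.mpr hallW
      have hcardW : 0 < Multiset.card W := Multiset.card_pos.mpr hW.1
      have hsum2 : (Multiset.card L) • W = m • W := by
        rw [← Multiset.sum_replicate, ← hrep, hLsum]
      have hcards := congrArg Multiset.card hsum2
      rw [Multiset.card_nsmul, Multiset.card_nsmul] at hcards
      have hLm : Multiset.card L = m := Nat.eq_of_mul_eq_mul_right hcardW hcards
      rw [hrep, hLm]
  exact ⟨part1, part2, part3, part4⟩
end
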